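/- arXiv:0906.0676 — 2 statements merged into one kernel-verified Lean document; each statement's English description precedes it below -/
import Mathlib

section
/- Conjugacy of derivatives (forward direction): let h : F → ℝ be bounded and suppose g = φ[h] is differentiable on K = [S_F^α(a₀), S_F^α(b₀)]. Then the F^α-derivative (D_F^α h)(θ) exists for all θ ∈ F and (D_F^α h)(θ) = g'(J(θ)). -/
open Set
open scoped ENNReal

structure Subdivision (a b : ℝ) where
  k : ℕ
  t : ℕ → ℝ
  first : t 0 = a
  last : t k = b
  mono : ∀ i < k, t i < t (i + 1)

def Subdivision.MeshLE {a b : ℝ} (P : Subdivision a b) (δ : ℝ) : Prop :=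
  ∀ i < P.k, P.t (i + 1) - P.t i ≤ δ

noncomputable def sigmaSum {n : ℕ} (α : ℝ) (w : ℝ → EuclideanSpace ℝ (Fin n))
    {a b : ℝ} (P : Subdivision a b) : ℝ :=
  (∑ i ∈ Finset.range P.k, ‖w (P.t (i + 1)) - w (P.t i)‖ ^ α) / Real.Gamma (α + 1)

noncomputable def gammaDelta {n : ℕ} (α : ℝ) (w : ℝ → EuclideanSpace ℝ (Fin n))
    (a b δ : ℝ) : ℝ≥0∞ :=
  ⨅ (P : Subdivision a b) (_ : P.MeshLE δ), ENNReal.ofReal (sigmaSum α w P)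

noncomputable def massFn {n : ℕ} (α : ℝ) (w : ℝ → EuclideanSpace ℝ (Fin n))
    (a b : ℝ) : ℝ≥0∞ :=
  ⨆ (δ : ℝ) (_ : 0 < δ), gammaDelta α w a b δ

/-- The staircase (rise) function S_F^α(t) = γ^α(F,a₀,t). -/
noncomputable def SF {n : ℕ} (α : ℝ) (w : ℝ → EuclideanSpace ℝ (Fin n))
    (a₀ : ℝ) (t : ℝ) : ℝ :=
  (massFn α w a₀ t).toReal

/-- `l` is the F-limit of `f` as θ' → θ through points of `F`. -/
def IsFLimit {n : ℕ} (F : Set (EuclideanSpace ℝ (Fin n)))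
    (f : EuclideanSpace ℝ (Fin n) → ℝ) (θ : EuclideanSpace ℝ (Fin n)) (l : ℝ) : Prop :=
  ∀ ε > (0 : ℝ), ∃ δ > (0 : ℝ), ∀ θ' ∈ F, θ' ≠ θ → ‖θ' - θ‖ < δ → |f θ' - l| < ε

/-- `f` is F-continuous at θ. -/
def FContinuousAt {n : ℕ} (F : Set (EuclideanSpace ℝ (Fin n)))
    (f : EuclideanSpace ℝ (Fin n) → ℝ) (θ : EuclideanSpace ℝ (Fin n)) : Prop :=
  IsFLimit F f θ (f θ)

/-- The F^α-derivative of `f` at θ is `l`: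
l = F-lim_{θ'→θ} (f(θ') − f(θ))/(J(θ') − J(θ)). -/
def HasFAlphaDerivAt {n : ℕ} (F : Set (EuclideanSpace ℝ (Fin n)))
    (J : EuclideanSpace ℝ (Fin n) → ℝ) (f : EuclideanSpace ℝ (Fin n) → ℝ)
    (θ : EuclideanSpace ℝ (Fin n)) (l : ℝ) : Prop :=
  IsFLimit F (fun θ' => (f θ' - f θ) / (J θ' - J θ)) θ l

/-- Upper F^α-sum U^α[f,F,P] of `f` over the subdivision `P`. -/
noncomputable def upperFSum {n : ℕ} (α : ℝ) (w : ℝ → EuclideanSpace ℝ (Fin n))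
    (a₀ : ℝ) (f : EuclideanSpace ℝ (Fin n) → ℝ) {a b : ℝ} (P : Subdivision a b) : ℝ :=
  ∑ i ∈ Finset.range P.k,
    sSup (f '' (w '' Icc (P.t i) (P.t (i + 1)))) *
      (SF α w a₀ (P.t (i + 1)) - SF α w a₀ (P.t i))

/-- Lower F^α-sum L^α[f,F,P] of `f` over the subdivision `P`. -/
noncomputable def lowerFSum {n : ℕ} (α : ℝ) (w : ℝ → EuclideanSpace ℝ (Fin n))
    (a₀ : ℝ) (f : EuclideanSpace ℝ (Fin n) → ℝ) {a b : ℝ} (P : Subdivision a b) : ℝ :=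
  ∑ i ∈ Finset.range P.k,
    sInf (f '' (w '' Icc (P.t i) (P.t (i + 1)))) *
      (SF α w a₀ (P.t (i + 1)) - SF α w a₀ (P.t i))

/-- `f` is F^α-integrable on C(a,b) with integral `v`:
inf of upper sums = sup of lower sums = v. -/
def HasFIntegral {n : ℕ} (α : ℝ) (w : ℝ → EuclideanSpace ℝ (Fin n)) (a₀ : ℝ)
    (f : EuclideanSpace ℝ (Fin n) → ℝ) (a b : ℝ) (v : ℝ) : Prop :=
  sInf (Set.range fun P : Subdivision a b => upperFSum α w a₀ f P) = v ∧
  sSup (Set.range fun P : Subdivision a b => lowerFSum α w a₀ f P) = v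


/-! ### Auxiliary development -/

section Aux

variable {n : ℕ} {α : ℝ} {w : ℝ → EuclideanSpace ℝ (Fin n)}

lemma Subdivision.t_mono_le {a b : ℝ} (P : Subdivision a b) :
    ∀ {i j : ℕ}, i ≤ j → j ≤ P.k → P.t i ≤ P.t j := by
  intro i j hij hj
  induction j with
  | zero => simp_all
  | succ m ih =>
    rcases Nat.lt_or_ge i (m + 1) with h | h
    · have h1 : i ≤ m := by omega
      exact (ih h1 (by omega)).trans (le_of_lt (P.mono m (by omega)))
    · have : i = m + 1 := by omega
      simp [this]

lemma Subdivision.t_mem {a b : ℝ} (P : Subdivision a b) {i : ℕ} (hi : i ≤ P.k) :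
    P.t i ∈ Icc a b := by
  constructor
  · have h0 := P.t_mono_le (Nat.zero_le i) hi
    rwa [P.first] at h0
  · have h0 := P.t_mono_le hi le_rfl
    rwa [P.last] at h0

lemma Subdivision.a_le_b {a b : ℝ} (P : Subdivision a b) : a ≤ b := by
  have := P.t_mem (i := 0) (Nat.zero_le _)
  rw [P.first] at this; exact this.2

lemma sigmaSum_nonneg (hΓ : 0 < Real.Gamma (α + 1)) {a b : ℝ} (P : Subdivision a b) :
    0 ≤ sigmaSum α w P := by
  apply div_nonneg _ hΓ.le
  exact Finset.sum_nonneg fun i _ => Real.rpow_nonneg (norm_nonneg _) _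

/-- A subdivision with mesh at most δ exists whenever `a ≤ b`, `0 < δ`. -/
lemma exists_meshLE {a b δ : ℝ} (hab : a ≤ b) (hδ : 0 < δ) :
    ∃ P : Subdivision a b, P.MeshLE δ := by
  rcases eq_or_lt_of_le hab with rfl | hab
  · exact ⟨⟨0, fun _ => a, rfl, rfl, fun i hi => absurd hi (Nat.not_lt_zero i)⟩,
      fun i hi => absurd hi (Nat.not_lt_zero i)⟩
  · set k : ℕ := ⌈(b - a) / δ⌉₊ with hk
    have hk0 : 0 < k := Nat.ceil_pos.mpr (div_pos (by linarith) hδ)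
    have hkR : (0 : ℝ) < k := by exact_mod_cast hk0
    have hkk : (b - a) / δ ≤ (k : ℝ) := Nat.le_ceil _
    have hstep : (b - a) / k ≤ δ := by
      rw [div_le_iff₀ hkR]
      calc b - a = ((b - a) / δ) * δ := by field_simp
        _ ≤ (k : ℝ) * δ := mul_le_mul_of_nonneg_right hkk hδ.le
        _ = δ * k := by ring
    have hpos : 0 < (b - a) / k := div_pos (by linarith) hkR
    refine ⟨⟨k, fun i => a + i * ((b - a) / k), by simp, ?_, ?_⟩, ?_⟩
    · have : (k : ℝ) ≠ 0 := hkR.ne'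
      field_simp
      ring
    · intro i hi
      show a + (i : ℝ) * ((b - a) / k) < a + ((i + 1 : ℕ) : ℝ) * ((b - a) / k)
      push_cast
      nlinarith
    · intro i hi
      show a + ((i + 1 : ℕ) : ℝ) * ((b - a) / k) - (a + (i : ℝ) * ((b - a) / k)) ≤ δ
      have heq : a + ((i + 1 : ℕ) : ℝ) * ((b - a) / k) - (a + (i : ℝ) * ((b - a) / k))
          = (b - a) / k := by push_cast; ring
      rw [heq]; exact hstep

lemma gammaDelta_le_ofReal {a b δ : ℝ} (P : Subdivision a b) (hP : P.MeshLE δ) :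
    gammaDelta α w a b δ ≤ ENNReal.ofReal (sigmaSum α w P) := by
  exact iInf₂_le P hP

lemma gammaDelta_lt_top {a b δ : ℝ} (hab : a ≤ b) (hδ : 0 < δ) :
    gammaDelta α w a b δ < ⊤ := by
  obtain ⟨P, hP⟩ := exists_meshLE hab hδ
  exact lt_of_le_of_lt (gammaDelta_le_ofReal (w := w) (α := α) P hP) ENNReal.ofReal_lt_top

lemma gammaDelta_self (a δ : ℝ) : gammaDelta α w a a δ = 0 := by
  apply le_antisymm _ zero_le
  have h := gammaDelta_le_ofReal (w := w) (α := α) (δ := δ)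
    (⟨0, fun _ => a, rfl, rfl, fun i hi => absurd hi (Nat.not_lt_zero i)⟩ : Subdivision a a)
    (fun i hi => absurd hi (Nat.not_lt_zero i))
  simpa [sigmaSum] using h

lemma massFn_self (a : ℝ) : massFn α w a a = 0 := by
  apply le_antisymm _ zero_le
  exact iSup₂_le fun δ hδ => le_of_eq (gammaDelta_self a δ)

lemma gammaDelta_anti {a b δ δ' : ℝ} (h : δ ≤ δ') :
    gammaDelta α w a b δ' ≤ gammaDelta α w a b δ := by
  exact le_iInf₂ fun P hP => iInf₂_le P (fun i hi => (hP i hi).trans h)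

lemma gammaDelta_le_massFn {a b δ : ℝ} (hδ : 0 < δ) :
    gammaDelta α w a b δ ≤ massFn α w a b := by
  exact le_iSup₂ (f := fun (δ : ℝ) (_ : 0 < δ) => gammaDelta α w a b δ) δ hδ

lemma gammaDelta_single (hα0 : 0 ≤ α) {a b δ : ℝ} (hab : a ≤ b) (hbδ : b - a ≤ δ) :
    gammaDelta α w a b δ ≤ ENNReal.ofReal (‖w b - w a‖ ^ α / Real.Gamma (α + 1)) := by
  rcases eq_or_lt_of_le hab with rfl | hab
  · rw [gammaDelta_self]; exact zero_le
  · let P : Subdivision a b :=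
      ⟨1, fun i => if i = 0 then a else b, by simp, by simp, by
        intro i hi
        have hi0 : i = 0 := by omega
        simp [hi0, hab]⟩
    have hP : P.MeshLE δ := by
      intro i hi
      have hi1 : i < 1 := hi
      have hi0 : i = 0 := by omega
      simp only [hi0, P]
      simpa using hbδ
    have h := gammaDelta_le_ofReal (w := w) (α := α) P hP
    simpa [sigmaSum, P] using h


/-- Concatenation of subdivisions. -/
def Subdivision.concat {a b c : ℝ} (P : Subdivision a b) (Q : Subdivision b c) :
    Subdivision a c where
  k := P.k + Q.k
  t i := if i ≤ P.k then P.t i else Q.t (i - P.k)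
  first := by simp [P.first]
  last := by
    rcases Nat.eq_zero_or_pos Q.k with h | h
    · have hbc : b = c := by
        have h2 := Q.last
        rw [h, Q.first] at h2
        exact h2
      simp [h, P.last, hbc]
    · have h2 : ¬ (P.k + Q.k ≤ P.k) := by omega
      simp [h2, Q.last]
  mono := by
    intro i hi
    rcases Nat.lt_or_ge i P.k with h | h
    · have h1 : i ≤ P.k := le_of_lt h
      have h2 : i + 1 ≤ P.k := h
      simp only [h1, h2, if_pos]
      exact P.mono i h
    · have h2 : ¬ (i + 1 ≤ P.k) := by omega
      by_cases h3 : i = P.k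
      · subst h3
        have hq : 0 < Q.k := by omega
        simp only [le_refl, if_pos, h2, if_neg, not_false_iff]
        have e1 : P.k + 1 - P.k = 1 := by omega
        rw [e1, P.last]
        have h4 := Q.mono 0 hq
        rwa [Q.first] at h4
      · have h1 : ¬ (i ≤ P.k) := by omega
        simp only [h1, h2, if_neg, not_false_iff]
        have e1 : i + 1 - P.k = (i - P.k) + 1 := by omega
        rw [e1]
        exact Q.mono (i - P.k) (by omega)

lemma Subdivision.concat_t_left {a b c : ℝ} (P : Subdivision a b) (Q : Subdivision b c)
    {i : ℕ} (hi : i ≤ P.k) : (P.concat Q).t i = P.t i := by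
  simp [Subdivision.concat, hi]

lemma Subdivision.concat_t_right {a b c : ℝ} (P : Subdivision a b) (Q : Subdivision b c)
    (j : ℕ) : (P.concat Q).t (P.k + j) = Q.t j := by
  rcases Nat.eq_zero_or_pos j with rfl | hj
  · simp [Subdivision.concat, P.last, Q.first]
  · have h1 : ¬ (P.k + j ≤ P.k) := by omega
    simp [Subdivision.concat, h1]

lemma Subdivision.concat_mesh {a b c δ : ℝ} {P : Subdivision a b} {Q : Subdivision b c}
    (hP : P.MeshLE δ) (hQ : Q.MeshLE δ) : (P.concat Q).MeshLE δ := by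
  intro i hi
  have hik : i < P.k + Q.k := hi
  rcases Nat.lt_or_ge i P.k with h | h
  · rw [P.concat_t_left Q (by omega), P.concat_t_left Q (by omega)]
    exact hP i h
  · obtain ⟨j, rfl⟩ : ∃ j, i = P.k + j := ⟨i - P.k, by omega⟩
    have e1 : P.k + j + 1 = P.k + (j + 1) := by omega
    rw [e1, P.concat_t_right, P.concat_t_right]
    exact hQ j (by omega)

lemma Subdivision.concat_sigma {a b c : ℝ} (P : Subdivision a b) (Q : Subdivision b c) :
    sigmaSum α w (P.concat Q) = sigmaSum α w P + sigmaSum α w Q := by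
  unfold sigmaSum
  rw [← add_div]
  congr 1
  have hk : (P.concat Q).k = P.k + Q.k := rfl
  rw [hk, Finset.sum_range_add]
  congr 1
  · apply Finset.sum_congr rfl
    intro i hi
    have hi' : i < P.k := Finset.mem_range.mp hi
    rw [P.concat_t_left Q (by omega), P.concat_t_left Q (by omega)]
  · apply Finset.sum_congr rfl
    intro j hj
    have e1 : P.k + j + 1 = P.k + (j + 1) := by omega
    rw [e1, P.concat_t_right, P.concat_t_right]

lemma gammaDelta_concat_le (hΓ : 0 < Real.Gamma (α + 1)) (a b c δ : ℝ) :
    gammaDelta α w a c δ ≤ gammaDelta α w a b δ + gammaDelta α w b c δ := by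
  refine ENNReal.le_of_forall_pos_le_add fun ε hε htop => ?_
  have hab : gammaDelta α w a b δ ≠ ⊤ := fun h => by simp [h] at htop
  have hbc : gammaDelta α w b c δ ≠ ⊤ := fun h => by simp [h] at htop
  have hε2 : (0 : ℝ≥0∞) < ε / 2 := by
    simp [ENNReal.div_pos_iff]
    exact_mod_cast hε.ne'
  obtain ⟨P, hPm, hPv⟩ : ∃ P : Subdivision a b, P.MeshLE δ ∧
      ENNReal.ofReal (sigmaSum α w P) ≤ gammaDelta α w a b δ + ε / 2 := by
    have hlt : gammaDelta α w a b δ < gammaDelta α w a b δ + ε / 2 :=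
      ENNReal.lt_add_right hab hε2.ne'
    rw [gammaDelta] at hlt
    rw [iInf_lt_iff] at hlt
    obtain ⟨P, hP⟩ := hlt
    rw [iInf_lt_iff] at hP
    obtain ⟨hPm, hPv⟩ := hP
    exact ⟨P, hPm, hPv.le⟩
  obtain ⟨Q, hQm, hQv⟩ : ∃ Q : Subdivision b c, Q.MeshLE δ ∧
      ENNReal.ofReal (sigmaSum α w Q) ≤ gammaDelta α w b c δ + ε / 2 := by
    have hlt : gammaDelta α w b c δ < gammaDelta α w b c δ + ε / 2 :=
      ENNReal.lt_add_right hbc hε2.ne'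
    rw [gammaDelta] at hlt
    rw [iInf_lt_iff] at hlt
    obtain ⟨Q, hQ⟩ := hlt
    rw [iInf_lt_iff] at hQ
    obtain ⟨hQm, hQv⟩ := hQ
    exact ⟨Q, hQm, hQv.le⟩
  calc gammaDelta α w a c δ
      ≤ ENNReal.ofReal (sigmaSum α w (P.concat Q)) :=
        gammaDelta_le_ofReal _ (Subdivision.concat_mesh hPm hQm)
    _ = ENNReal.ofReal (sigmaSum α w P) + ENNReal.ofReal (sigmaSum α w Q) := by
        rw [Subdivision.concat_sigma, ENNReal.ofReal_add (sigmaSum_nonneg hΓ P)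
          (sigmaSum_nonneg hΓ Q)]
    _ ≤ (gammaDelta α w a b δ + ε / 2) + (gammaDelta α w b c δ + ε / 2) :=
        add_le_add hPv hQv
    _ = gammaDelta α w a b δ + gammaDelta α w b c δ + (ε / 2 + ε / 2) := by ring
    _ = gammaDelta α w a b δ + gammaDelta α w b c δ + ε := by
        rw [ENNReal.add_halves]

lemma massFn_subadd (hΓ : 0 < Real.Gamma (α + 1)) (a b c : ℝ) :
    massFn α w a c ≤ massFn α w a b + massFn α w b c := by
  refine iSup₂_le fun δ hδ => ?_
  exact (gammaDelta_concat_le hΓ a b c δ).trans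
    (add_le_add (gammaDelta_le_massFn hδ) (gammaDelta_le_massFn hδ))



/-- Splitting a subdivision of `[a,c]` at an intermediate point `b`. -/
lemma exists_split (hΓ : 0 < Real.Gamma (α + 1)) (hα0 : 0 ≤ α) {a b c δ η : ℝ}
    (hb : b ∈ Icc a c) (R : Subdivision a c) (hR : R.MeshLE δ) (hη : 0 ≤ η)
    (hmod : ∀ s ∈ Icc a c, ∀ s' ∈ Icc a c, |s' - s| ≤ δ → ‖w s' - w s‖ ≤ η) :
    ∃ (P : Subdivision a b) (Q : Subdivision b c), P.MeshLE δ ∧ Q.MeshLE δ ∧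
      sigmaSum α w P + sigmaSum α w Q ≤ sigmaSum α w R + 2 * η ^ α / Real.Gamma (α + 1) := by
  classical
  set f : ℕ → ℝ := fun i => ‖w (R.t (i + 1)) - w (R.t i)‖ ^ α with hf
  have hfnn : ∀ i, 0 ≤ f i := fun i => Real.rpow_nonneg (norm_nonneg _) _
  have hηα : 0 ≤ η ^ α := Real.rpow_nonneg hη _
  set j : ℕ := Nat.findGreatest (fun m => R.t m ≤ b) R.k with hj
  have hj_le : j ≤ R.k := Nat.findGreatest_le R.k
  have hjb : R.t j ≤ b := by
    have h := Nat.findGreatest_spec (P := fun m => R.t m ≤ b) (m := 0)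
      (Nat.zero_le R.k) (by show R.t 0 ≤ b; rw [R.first]; exact hb.1)
    rw [← hj] at h
    exact h
  by_cases hbc : R.t j = b
  · -- the point b is one of the subdivision points
    refine ⟨⟨j, fun i => if i ≤ j then R.t i else b, by simp [R.first], by simp [hbc], ?_⟩,
      ⟨R.k - j, fun i => R.t (j + i), by simpa using hbc, ?_, ?_⟩, ?_, ?_, ?_⟩
    · intro i hi
      have hi' : i < j := hi
      have h1 : i ≤ j := by omega
      have h2 : i + 1 ≤ j := hi'
      simp only [h1, h2, if_pos]
      exact R.mono i (by omega)
    · show R.t (j + (R.k - j)) = c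
      rw [show j + (R.k - j) = R.k by omega, R.last]
    · intro i hi
      have hi' : i < R.k - j := hi
      show R.t (j + i) < R.t (j + (i + 1))
      rw [show j + (i + 1) = (j + i) + 1 by omega]
      exact R.mono (j + i) (by omega)
    · intro i hi
      have hi' : i < j := hi
      have h1 : i ≤ j := by omega
      have h2 : i + 1 ≤ j := hi'
      simp only [h1, h2, if_pos]
      exact hR i (by omega)
    · intro i hi
      have hi' : i < R.k - j := hi
      show R.t (j + (i + 1)) - R.t (j + i) ≤ δ
      rw [show j + (i + 1) = (j + i) + 1 by omega]
      exact hR (j + i) (by omega)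
    · have hadd := Finset.sum_range_add f j (R.k - j)
      rw [show j + (R.k - j) = R.k by omega] at hadd
      have hP : (∑ i ∈ Finset.range j,
          ‖w ((fun i => if i ≤ j then R.t i else b) (i + 1)) -
            w ((fun i => if i ≤ j then R.t i else b) i)‖ ^ α) = ∑ i ∈ Finset.range j, f i := by
        apply Finset.sum_congr rfl
        intro i hi
        have hi' : i < j := Finset.mem_range.mp hi
        have h1 : i ≤ j := by omega
        have h2 : i + 1 ≤ j := hi'
        simp only [h1, h2, if_pos, hf]
      have hQ : (∑ i ∈ Finset.range (R.k - j),
          ‖w ((fun i => R.t (j + i)) (i + 1)) - w ((fun i => R.t (j + i)) i)‖ ^ α)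
          = ∑ i ∈ Finset.range (R.k - j), f (j + i) := by
        apply Finset.sum_congr rfl
        intro i hi
        simp only [hf]
        rw [show j + (i + 1) = (j + i) + 1 by omega]
      show (∑ i ∈ Finset.range j,
          ‖w ((fun i => if i ≤ j then R.t i else b) (i + 1)) -
            w ((fun i => if i ≤ j then R.t i else b) i)‖ ^ α) / Real.Gamma (α + 1) +
        (∑ i ∈ Finset.range (R.k - j),
          ‖w ((fun i => R.t (j + i)) (i + 1)) - w ((fun i => R.t (j + i)) i)‖ ^ α) /
            Real.Gamma (α + 1) ≤ sigmaSum α w R + 2 * η ^ α / Real.Gamma (α + 1)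
      rw [hP, hQ, ← add_div, ← hadd]
      have hσ : sigmaSum α w R = (∑ i ∈ Finset.range R.k, f i) / Real.Gamma (α + 1) := rfl
      rw [hσ]
      have hpos : (0:ℝ) ≤ 2 * η ^ α / Real.Gamma (α + 1) := by positivity
      linarith
  · -- b lies strictly inside the interval (R.t j, R.t (j+1))
    have hlt : R.t j < b := lt_of_le_of_ne hjb hbc
    have hjk : j < R.k := by
      rcases eq_or_lt_of_le hj_le with heq | h
      · exfalso
        have hc : R.t j = c := by rw [heq, R.last]
        have hcb : c ≤ b := hc ▸ hjb
        exact hbc (by rw [hc]; exact le_antisymm hcb hb.2)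
      · exact h
    have hgt : b < R.t (j + 1) := by
      have h := Nat.findGreatest_is_greatest (P := fun m => R.t m ≤ b)
        (show Nat.findGreatest (fun m => R.t m ≤ b) R.k < j + 1 by omega) hjk
      exact lt_of_not_ge h
    have hmeshj : R.t (j + 1) - R.t j ≤ δ := hR j hjk
    have htj_mem : R.t j ∈ Icc a c := R.t_mem (by omega)
    have htj1_mem : R.t (j + 1) ∈ Icc a c := R.t_mem (by omega)
    have hnew1 : ‖w b - w (R.t j)‖ ≤ η := by
      apply hmod (R.t j) htj_mem b hb
      rw [abs_of_nonneg (by linarith)]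
      linarith
    have hnew2 : ‖w (R.t (j + 1)) - w b‖ ≤ η := by
      apply hmod b hb (R.t (j + 1)) htj1_mem
      rw [abs_of_nonneg (by linarith)]
      linarith
    have hnew1' : ‖w b - w (R.t j)‖ ^ α ≤ η ^ α :=
      Real.rpow_le_rpow (norm_nonneg _) hnew1 hα0
    have hnew2' : ‖w (R.t (j + 1)) - w b‖ ^ α ≤ η ^ α :=
      Real.rpow_le_rpow (norm_nonneg _) hnew2 hα0
    refine ⟨⟨j + 1, fun i => if i ≤ j then R.t i else b, by simp [R.first],
        by simp, ?_⟩,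
      ⟨R.k - j, fun i => if i = 0 then b else R.t (j + i), by simp, ?_, ?_⟩,
      ?_, ?_, ?_⟩
    · intro i hi
      have hi' : i < j + 1 := hi
      by_cases h3 : i < j
      · have h1 : i ≤ j := by omega
        have h2 : i + 1 ≤ j := h3
        simp only [h1, h2, if_pos]
        exact R.mono i (by omega)
      · have h4 : i = j := by omega
        have h2 : ¬ (j + 1 ≤ j) := by omega
        simp only [h4, if_pos (le_refl j), if_neg h2]
        exact hlt
    · show (if R.k - j = 0 then b else R.t (j + (R.k - j))) = c
      have h0 : R.k - j ≠ 0 := by omega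
      rw [if_neg h0, show j + (R.k - j) = R.k by omega, R.last]
    · intro i hi
      have hi' : i < R.k - j := hi
      by_cases h0 : i = 0
      · subst h0
        simp only [if_pos rfl, if_neg (by omega : ¬ (0 + 1 = 0))]
        exact hgt
      · simp only [if_neg h0, if_neg (by omega : ¬ (i + 1 = 0))]
        show R.t (j + i) < R.t (j + (i + 1))
        rw [show j + (i + 1) = (j + i) + 1 by omega]
        exact R.mono (j + i) (by omega)
    · intro i hi
      have hi' : i < j + 1 := hi
      by_cases h3 : i < j
      · have h1 : i ≤ j := by omega
        have h2 : i + 1 ≤ j := h3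
        simp only [h1, h2, if_pos]
        exact hR i (by omega)
      · have h4 : i = j := by omega
        have h2 : ¬ (j + 1 ≤ j) := by omega
        simp only [h4, if_pos (le_refl j), if_neg h2]
        linarith
    · intro i hi
      have hi' : i < R.k - j := hi
      by_cases h0 : i = 0
      · subst h0
        simp only [if_pos rfl, if_neg (by omega : ¬ (0 + 1 = 0))]
        show R.t (j + 1) - b ≤ δ
        linarith
      · simp only [if_neg h0, if_neg (by omega : ¬ (i + 1 = 0))]
        show R.t (j + (i + 1)) - R.t (j + i) ≤ δ
        rw [show j + (i + 1) = (j + i) + 1 by omega]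
        exact hR (j + i) (by omega)
    · -- the sum estimate
      have hadd := Finset.sum_range_add f (j + 1) (R.k - j - 1)
      rw [show (j + 1) + (R.k - j - 1) = R.k by omega] at hadd
      have hsucc := Finset.sum_range_succ f j
      have hP : (∑ i ∈ Finset.range (j + 1),
          ‖w ((fun i => if i ≤ j then R.t i else b) (i + 1)) -
            w ((fun i => if i ≤ j then R.t i else b) i)‖ ^ α)
          = (∑ i ∈ Finset.range j, f i) + ‖w b - w (R.t j)‖ ^ α := by
        rw [Finset.sum_range_succ]
        congr 1
        · apply Finset.sum_congr rfl
          intro i hi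
          have hi' : i < j := Finset.mem_range.mp hi
          have h1 : i ≤ j := by omega
          have h2 : i + 1 ≤ j := hi'
          simp only [h1, h2, if_pos, hf]
        · have h2 : ¬ (j + 1 ≤ j) := by omega
          simp only [if_neg h2, if_pos (le_refl j)]
      have hQ : (∑ i ∈ Finset.range (R.k - j),
          ‖w ((fun i => if i = 0 then b else R.t (j + i)) (i + 1)) -
            w ((fun i => if i = 0 then b else R.t (j + i)) i)‖ ^ α)
          = ‖w (R.t (j + 1)) - w b‖ ^ α + ∑ i ∈ Finset.range (R.k - j - 1), f (j + 1 + i) := by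
        rw [show R.k - j = (R.k - j - 1) + 1 by omega, Finset.sum_range_succ']
        simp only [Nat.add_sub_cancel]
        rw [add_comm]
        congr 1
        apply Finset.sum_congr rfl
        intro i hi
        simp only [if_neg (by omega : ¬ (i + 1 = 0)),
          if_neg (by omega : ¬ (i + 1 + 1 = 0)), hf]
        rw [show j + (i + 1 + 1) = (j + (i + 1)) + 1 by omega,
          show j + 1 + i = j + (i + 1) by omega]
      show (∑ i ∈ Finset.range (j + 1),
          ‖w ((fun i => if i ≤ j then R.t i else b) (i + 1)) -
            w ((fun i => if i ≤ j then R.t i else b) i)‖ ^ α) / Real.Gamma (α + 1) +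
        (∑ i ∈ Finset.range (R.k - j),
          ‖w ((fun i => if i = 0 then b else R.t (j + i)) (i + 1)) -
            w ((fun i => if i = 0 then b else R.t (j + i)) i)‖ ^ α) / Real.Gamma (α + 1)
          ≤ sigmaSum α w R + 2 * η ^ α / Real.Gamma (α + 1)
      rw [hP, hQ]
      have hσ : sigmaSum α w R = (∑ i ∈ Finset.range R.k, f i) / Real.Gamma (α + 1) := rfl
      rw [hσ, ← add_div, ← add_div]
      have key : (∑ i ∈ Finset.range j, f i) + ‖w b - w (R.t j)‖ ^ α +
          (‖w (R.t (j + 1)) - w b‖ ^ α + ∑ i ∈ Finset.range (R.k - j - 1), f (j + 1 + i))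
          ≤ (∑ i ∈ Finset.range R.k, f i) + 2 * η ^ α := by
        rw [hadd, hsucc]
        have := hfnn j
        linarith
      exact (div_le_div_iff_of_pos_right hΓ).mpr key


lemma gammaDelta_split (hΓ : 0 < Real.Gamma (α + 1)) (hα0 : 0 ≤ α) {a b c δ η : ℝ}
    (hδ : 0 < δ) (hη : 0 ≤ η) (hb : b ∈ Icc a c)
    (hmod : ∀ s ∈ Icc a c, ∀ s' ∈ Icc a c, |s' - s| ≤ δ → ‖w s' - w s‖ ≤ η) :
    gammaDelta α w a b δ + gammaDelta α w b c δ ≤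
      gammaDelta α w a c δ + ENNReal.ofReal (2 * η ^ α / Real.Gamma (α + 1)) := by
  have hac : a ≤ c := hb.1.trans hb.2
  refine ENNReal.le_of_forall_pos_le_add fun ε hε htop => ?_
  have hfin : gammaDelta α w a c δ ≠ ⊤ := (gammaDelta_lt_top hac hδ).ne
  have hε' : (0 : ℝ≥0∞) < ε := by exact_mod_cast hε
  obtain ⟨R, hRm, hRv⟩ : ∃ R : Subdivision a c, R.MeshLE δ ∧
      ENNReal.ofReal (sigmaSum α w R) ≤ gammaDelta α w a c δ + ε := by
    have hlt : gammaDelta α w a c δ < gammaDelta α w a c δ + ε :=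
      ENNReal.lt_add_right hfin hε'.ne'
    rw [gammaDelta, iInf_lt_iff] at hlt
    obtain ⟨R, hR⟩ := hlt
    rw [iInf_lt_iff] at hR
    obtain ⟨hRm, hRv⟩ := hR
    exact ⟨R, hRm, hRv.le⟩
  obtain ⟨P, Q, hPm, hQm, hsum⟩ := exists_split hΓ hα0 hb R hRm hη hmod
  calc gammaDelta α w a b δ + gammaDelta α w b c δ
      ≤ ENNReal.ofReal (sigmaSum α w P) + ENNReal.ofReal (sigmaSum α w Q) :=
        add_le_add (gammaDelta_le_ofReal P hPm) (gammaDelta_le_ofReal Q hQm)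
    _ = ENNReal.ofReal (sigmaSum α w P + sigmaSum α w Q) :=
        (ENNReal.ofReal_add (sigmaSum_nonneg hΓ P) (sigmaSum_nonneg hΓ Q)).symm
    _ ≤ ENNReal.ofReal (sigmaSum α w R + 2 * η ^ α / Real.Gamma (α + 1)) :=
        ENNReal.ofReal_le_ofReal hsum
    _ = ENNReal.ofReal (sigmaSum α w R) +
        ENNReal.ofReal (2 * η ^ α / Real.Gamma (α + 1)) :=
        ENNReal.ofReal_add (sigmaSum_nonneg hΓ R) (by positivity)
    _ ≤ gammaDelta α w a c δ + ε + ENNReal.ofReal (2 * η ^ α / Real.Gamma (α + 1)) :=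
        add_le_add hRv le_rfl
    _ = gammaDelta α w a c δ + ENNReal.ofReal (2 * η ^ α / Real.Gamma (α + 1)) + ε := by
        ring

/-- The key continuity estimate: the mass of a short subinterval is small. -/
lemma mass_small {a₀ b₀ : ℝ} (hΓ : 0 < Real.Gamma (α + 1)) (hα0 : 0 < α)
    (hw : ContinuousOn w (Icc a₀ b₀)) (hab : a₀ ≤ b₀)
    (hβ : massFn α w a₀ b₀ ≠ ⊤) {ε : ℝ} (hε : 0 < ε) :
    ∃ δ₀ > (0 : ℝ), ∀ u v : ℝ, u ∈ Icc a₀ b₀ → v ∈ Icc a₀ b₀ → u ≤ v → v - u ≤ δ₀ →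
      massFn α w u v ≤ ENNReal.ofReal ε := by
  set β := massFn α w a₀ b₀ with hβdef
  -- choose η with η ^ α = ε * Γ(α+1) / 12
  set η : ℝ := (ε * Real.Gamma (α + 1) / 12) ^ (α⁻¹ : ℝ) with hηdef
  have hα0' : α ≠ 0 := hα0.ne'
  have hη : 0 < η := Real.rpow_pos_of_pos (by positivity) _
  have hηα : η ^ α = ε * Real.Gamma (α + 1) / 12 :=
    Real.rpow_inv_rpow (by positivity) hα0'
  have herr : 2 * η ^ α / Real.Gamma (α + 1) = ε / 6 := by
    rw [hηα]; field_simp; ring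
  -- uniform continuity of w
  obtain ⟨δ₁, hδ₁, hucont⟩ : ∃ δ₁ > (0:ℝ), ∀ s ∈ Icc a₀ b₀, ∀ s' ∈ Icc a₀ b₀,
      |s' - s| ≤ δ₁ → ‖w s' - w s‖ ≤ η := by
    have huc := (isCompact_Icc (a := a₀) (b := b₀)).uniformContinuousOn_of_continuous hw
    rw [Metric.uniformContinuousOn_iff] at huc
    obtain ⟨δ₁, hδ₁, hd⟩ := huc η hη
    refine ⟨δ₁ / 2, by linarith, fun s hs s' hs' hss' => ?_⟩
    have := hd s' hs' s hs (by rw [Real.dist_eq]; linarith)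
    rw [dist_eq_norm] at this
    exact this.le
  -- choose δ₂ with β ≤ γ_{δ₂}(a₀,b₀) + ε/3
  obtain ⟨δ₂, hδ₂, hβδ₂⟩ : ∃ δ₂ > (0:ℝ),
      β ≤ gammaDelta α w a₀ b₀ δ₂ + ENNReal.ofReal (ε / 3) := by
    by_cases h0 : β ≤ ENNReal.ofReal (ε / 3)
    · exact ⟨1, one_pos, h0.trans le_add_self⟩
    · push_neg at h0
      have hlt : β - ENNReal.ofReal (ε / 3) < β := by
        apply ENNReal.sub_lt_self hβ
        · intro h
          rw [h] at h0
          exact (not_lt_of_ge zero_le) h0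
        · simp [ENNReal.ofReal_pos]
          linarith
      rw [hβdef, massFn, lt_iSup_iff] at hlt
      obtain ⟨δ₂, hδ₂⟩ := hlt
      rw [lt_iSup_iff] at hδ₂
      obtain ⟨hδ₂pos, hδ₂v⟩ := hδ₂
      refine ⟨δ₂, hδ₂pos, ?_⟩
      have hδ₂v' : β - ENNReal.ofReal (ε / 3) < gammaDelta α w a₀ b₀ δ₂ := hδ₂v
      exact le_of_lt (ENNReal.lt_add_of_sub_lt_right (Or.inl hβ) hδ₂v')
  set δ₀ : ℝ := min δ₁ δ₂ with hδ₀def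
  have hδ₀ : 0 < δ₀ := lt_min hδ₁ hδ₂
  refine ⟨δ₀, hδ₀, fun u v hu hv huv hvu => ?_⟩
  have hsub : Icc u v ⊆ Icc a₀ b₀ := Icc_subset_Icc hu.1 hv.2
  -- the single-interval bound at any scale ≥ δ₀
  have hwsmall : ‖w v - w u‖ ^ α / Real.Gamma (α + 1) ≤ ε / 12 := by
    have h1 : ‖w v - w u‖ ≤ η := hucont u hu v hv (by rw [abs_of_nonneg (by linarith)]; linarith [min_le_left δ₁ δ₂])
    have h2 : ‖w v - w u‖ ^ α ≤ η ^ α := Real.rpow_le_rpow (norm_nonneg _) h1 hα0.le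
    rw [hηα] at h2
    rw [div_le_iff₀ hΓ]
    calc ‖w v - w u‖ ^ α ≤ ε * Real.Gamma (α + 1) / 12 := h2
      _ = ε / 12 * Real.Gamma (α + 1) := by ring
  have hsing : ∀ δ' : ℝ, v - u ≤ δ' → gammaDelta α w u v δ' ≤ ENNReal.ofReal (ε / 12) :=
    fun δ' hδ' => (gammaDelta_single hα0.le huv hδ').trans (ENNReal.ofReal_le_ofReal hwsmall)
  rw [massFn]
  refine iSup₂_le fun δ hδpos => ?_
  rcases le_or_gt δ₀ δ with hcase | hcase
  · -- large mesh: use antitonicity and the one-interval subdivision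
    calc gammaDelta α w u v δ ≤ gammaDelta α w u v δ₀ := gammaDelta_anti hcase
      _ ≤ ENNReal.ofReal (ε / 12) := hsing δ₀ hvu
      _ ≤ ENNReal.ofReal ε := ENNReal.ofReal_le_ofReal (by linarith)
  · -- small mesh
    have hδδ₁ : δ ≤ δ₁ := le_of_lt (lt_of_lt_of_le hcase (min_le_left _ _))
    have hδδ₂ : δ ≤ δ₂ := le_of_lt (lt_of_lt_of_le hcase (min_le_right _ _))
    have hmodδ : ∀ s ∈ Icc a₀ b₀, ∀ s' ∈ Icc a₀ b₀, |s' - s| ≤ δ → ‖w s' - w s‖ ≤ η :=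
      fun s hs s' hs' h => hucont s hs s' hs' (h.trans hδδ₁)
    -- split inequality at u and then at v
    have hsplit1 : gammaDelta α w a₀ u δ + gammaDelta α w u b₀ δ ≤
        gammaDelta α w a₀ b₀ δ + ENNReal.ofReal (ε / 6) := by
      have := gammaDelta_split hΓ hα0.le hδpos hη.le (⟨hu.1, hu.2⟩ : u ∈ Icc a₀ b₀) hmodδ
      rwa [herr] at this
    have hsplit2 : gammaDelta α w u v δ + gammaDelta α w v b₀ δ ≤
        gammaDelta α w u b₀ δ + ENNReal.ofReal (ε / 6) := by
      have hmodδ' : ∀ s ∈ Icc u b₀, ∀ s' ∈ Icc u b₀, |s' - s| ≤ δ → ‖w s' - w s‖ ≤ η :=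
        fun s hs s' hs' h => hmodδ s (⟨hu.1.trans hs.1, hs.2⟩) s' (⟨hu.1.trans hs'.1, hs'.2⟩) h
      have := gammaDelta_split hΓ hα0.le hδpos hη.le (⟨huv, hv.2⟩ : v ∈ Icc u b₀) hmodδ'
      rwa [herr] at this
    -- lower bound via concatenation at scale δ₂
    have hconcat : β ≤ gammaDelta α w a₀ u δ + gammaDelta α w v b₀ δ +
        ENNReal.ofReal (ε / 12) + ENNReal.ofReal (ε / 3) := by
      calc β ≤ gammaDelta α w a₀ b₀ δ₂ + ENNReal.ofReal (ε / 3) := hβδ₂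
        _ ≤ gammaDelta α w a₀ u δ₂ + gammaDelta α w u b₀ δ₂ + ENNReal.ofReal (ε / 3) := by
            exact add_le_add (gammaDelta_concat_le hΓ a₀ u b₀ δ₂) le_rfl
        _ ≤ gammaDelta α w a₀ u δ₂ + (gammaDelta α w u v δ₂ + gammaDelta α w v b₀ δ₂) +
            ENNReal.ofReal (ε / 3) := by
            exact add_le_add (add_le_add le_rfl (gammaDelta_concat_le hΓ u v b₀ δ₂)) le_rfl
        _ ≤ gammaDelta α w a₀ u δ + (ENNReal.ofReal (ε / 12) + gammaDelta α w v b₀ δ) +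
            ENNReal.ofReal (ε / 3) := by
            refine add_le_add (add_le_add (gammaDelta_anti hδδ₂)
              (add_le_add (hsing δ₂ (hvu.trans (min_le_right δ₁ δ₂))) (gammaDelta_anti hδδ₂))) le_rfl
        _ = gammaDelta α w a₀ u δ + gammaDelta α w v b₀ δ +
            ENNReal.ofReal (ε / 12) + ENNReal.ofReal (ε / 3) := by ring
    -- upper bound for the triple sum
    have hupper : gammaDelta α w a₀ u δ + gammaDelta α w u v δ + gammaDelta α w v b₀ δ ≤
        β + ENNReal.ofReal (ε / 3) := by
      calc gammaDelta α w a₀ u δ + gammaDelta α w u v δ + gammaDelta α w v b₀ δ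
          = gammaDelta α w a₀ u δ + (gammaDelta α w u v δ + gammaDelta α w v b₀ δ) := by ring
        _ ≤ gammaDelta α w a₀ u δ + (gammaDelta α w u b₀ δ + ENNReal.ofReal (ε / 6)) :=
            add_le_add le_rfl hsplit2
        _ = gammaDelta α w a₀ u δ + gammaDelta α w u b₀ δ + ENNReal.ofReal (ε / 6) := by ring
        _ ≤ gammaDelta α w a₀ b₀ δ + ENNReal.ofReal (ε / 6) + ENNReal.ofReal (ε / 6) :=
            add_le_add hsplit1 le_rfl
        _ ≤ β + ENNReal.ofReal (ε / 6) + ENNReal.ofReal (ε / 6) := by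
            exact add_le_add (add_le_add (gammaDelta_le_massFn hδpos) le_rfl) le_rfl
        _ = β + (ENNReal.ofReal (ε / 6) + ENNReal.ofReal (ε / 6)) := by ring
        _ = β + ENNReal.ofReal (ε / 3) := by
            have e1 : ENNReal.ofReal (ε / 6) + ENNReal.ofReal (ε / 6)
                = ENNReal.ofReal (ε / 6 + ε / 6) :=
              (ENNReal.ofReal_add (by linarith) (by linarith)).symm
            rw [e1]
            congr 1
            ring
    -- combine
    have hA : gammaDelta α w a₀ u δ ≠ ⊤ := (gammaDelta_lt_top hu.1 hδpos).ne
    have hC : gammaDelta α w v b₀ δ ≠ ⊤ := (gammaDelta_lt_top hv.2 hδpos).ne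
    have hchain : gammaDelta α w a₀ u δ + gammaDelta α w v b₀ δ + gammaDelta α w u v δ ≤
        gammaDelta α w a₀ u δ + gammaDelta α w v b₀ δ +
          (ENNReal.ofReal (ε / 12) + ENNReal.ofReal (ε / 3) + ENNReal.ofReal (ε / 3)) := by
      calc gammaDelta α w a₀ u δ + gammaDelta α w v b₀ δ + gammaDelta α w u v δ
          = gammaDelta α w a₀ u δ + gammaDelta α w u v δ + gammaDelta α w v b₀ δ := by ring
        _ ≤ β + ENNReal.ofReal (ε / 3) := hupper
        _ ≤ gammaDelta α w a₀ u δ + gammaDelta α w v b₀ δ +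
            ENNReal.ofReal (ε / 12) + ENNReal.ofReal (ε / 3) + ENNReal.ofReal (ε / 3) :=
            add_le_add hconcat le_rfl
        _ = gammaDelta α w a₀ u δ + gammaDelta α w v b₀ δ +
            (ENNReal.ofReal (ε / 12) + ENNReal.ofReal (ε / 3) + ENNReal.ofReal (ε / 3)) := by
            ring
    have hfinal := (ENNReal.add_le_add_iff_left
      (by exact ENNReal.add_ne_top.mpr ⟨hA, hC⟩ :
        gammaDelta α w a₀ u δ + gammaDelta α w v b₀ δ ≠ ⊤)).mp
      (by exact hchain)
    calc gammaDelta α w u v δ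
        ≤ ENNReal.ofReal (ε / 12) + ENNReal.ofReal (ε / 3) + ENNReal.ofReal (ε / 3) := hfinal
      _ = ENNReal.ofReal (ε / 12 + ε / 3 + ε / 3) := by
          have e1 : ENNReal.ofReal (ε / 12) + ENNReal.ofReal (ε / 3)
              = ENNReal.ofReal (ε / 12 + ε / 3) :=
            (ENNReal.ofReal_add (by linarith) (by linarith)).symm
          have e2 : ENNReal.ofReal (ε / 12 + ε / 3) + ENNReal.ofReal (ε / 3)
              = ENNReal.ofReal (ε / 12 + ε / 3 + ε / 3) :=
            (ENNReal.ofReal_add (by linarith) (by linarith)).symm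
          rw [e1, e2]
      _ ≤ ENNReal.ofReal ε := ENNReal.ofReal_le_ofReal (by linarith)



/-- Continuity of the inverse of an injective continuous map on a compact interval,
at one point, in ε-δ form. -/
lemma inv_cont {a₀ b₀ : ℝ} (hw : ContinuousOn w (Icc a₀ b₀)) (hinj : InjOn w (Icc a₀ b₀))
    {t : ℝ} (ht : t ∈ Icc a₀ b₀) {δ₀ : ℝ} (hδ₀ : 0 < δ₀) :
    ∃ δ > (0:ℝ), ∀ t' ∈ Icc a₀ b₀, ‖w t' - w t‖ < δ → |t' - t| < δ₀ := by
  set C : Set ℝ := Icc a₀ b₀ \ Metric.ball t δ₀ with hC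
  have hCcomp : IsCompact C := isCompact_Icc.diff Metric.isOpen_ball
  have himage : IsCompact (w '' C) := hCcomp.image_of_continuousOn (hw.mono diff_subset)
  have hclosed : IsClosed (w '' C) := himage.isClosed
  have hnot : w t ∉ w '' C := by
    rintro ⟨s, hs, hws⟩
    have hst : s = t := hinj hs.1 ht hws
    apply hs.2
    rw [hst]
    exact Metric.mem_ball_self hδ₀
  obtain ⟨δ, hδpos, hball⟩ := Metric.isOpen_iff.mp hclosed.isOpen_compl (w t) hnot
  refine ⟨δ, hδpos, fun t' ht' hlt => ?_⟩
  by_contra hcon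
  push_neg at hcon
  have ht'C : t' ∈ C := by
    refine ⟨ht', fun hmem => ?_⟩
    rw [Metric.mem_ball, Real.dist_eq] at hmem
    exact absurd hmem (not_lt_of_ge hcon)
  have h1 : w t' ∈ w '' C := mem_image_of_mem _ ht'C
  have h2 : w t' ∈ Metric.ball (w t) δ := by
    rw [Metric.mem_ball, dist_eq_norm]
    exact hlt
  exact hball h2 h1


end Aux

/-- conjugacy of derivatives, forward direction: if h is bounded
on F and g = φ[h] is differentiable on K = [S_F^α(a₀), S_F^α(b₀)], then the
F^α-derivative of h exists at every θ ∈ F and equals g'(J(θ)). -/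
theorem conjugacy_of_derivatives {n : ℕ} (hn : 1 ≤ n) {a₀ b₀ : ℝ}
    (w : ℝ → EuclideanSpace ℝ (Fin n))
    (hw : ContinuousOn w (Icc a₀ b₀)) (hinj : InjOn w (Icc a₀ b₀))
    {α : ℝ} (hα : α ∈ Icc (1 : ℝ) (n : ℝ))
    (hfin : ∀ t ∈ Icc a₀ b₀, massFn α w a₀ t ≠ ⊤)
    (hS : StrictMonoOn (SF α w a₀) (Icc a₀ b₀))
    (J : EuclideanSpace ℝ (Fin n) → ℝ)
    (hJ : ∀ t ∈ Icc a₀ b₀, J (w t) = SF α w a₀ t)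
    (h : EuclideanSpace ℝ (Fin n) → ℝ)
    (hbdd : ∃ M, ∀ θ ∈ w '' Icc a₀ b₀, |h θ| ≤ M)
    (g g' : ℝ → ℝ) (hg : ∀ t ∈ Icc a₀ b₀, g (SF α w a₀ t) = h (w t))
    (hdiff : ∀ v ∈ Icc (SF α w a₀ a₀) (SF α w a₀ b₀),
      HasDerivWithinAt g (g' v) (Icc (SF α w a₀ a₀) (SF α w a₀ b₀)) v) :
    ∀ θ ∈ w '' Icc a₀ b₀,
      HasFAlphaDerivAt (w '' Icc a₀ b₀) J h θ (g' (J θ)) := by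
  intro θ hθ
  obtain ⟨t, ht, rfl⟩ := hθ
  have hab : a₀ ≤ b₀ := ht.1.trans ht.2
  have hΓ : 0 < Real.Gamma (α + 1) := Real.Gamma_pos_of_pos (by linarith [hα.1])
  have hα0 : 0 < α := lt_of_lt_of_le one_pos hα.1
  have hβ : massFn α w a₀ b₀ ≠ ⊤ := hfin b₀ ⟨hab, le_rfl⟩
  have ha₀mem : a₀ ∈ Icc a₀ b₀ := ⟨le_rfl, hab⟩
  have hb₀mem : b₀ ∈ Icc a₀ b₀ := ⟨hab, le_rfl⟩
  have hSmono : ∀ s s', s ∈ Icc a₀ b₀ → s' ∈ Icc a₀ b₀ → s ≤ s' →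
      SF α w a₀ s ≤ SF α w a₀ s' := by
    intro s s' hs hs' hss'
    rcases eq_or_lt_of_le hss' with rfl | hlt
    · exact le_rfl
    · exact (hS hs hs' hlt).le
  set v₀ := SF α w a₀ t with hv₀
  have hv₀K : v₀ ∈ Icc (SF α w a₀ a₀) (SF α w a₀ b₀) :=
    ⟨hSmono a₀ t ha₀mem ht ht.1, hSmono t b₀ ht hb₀mem ht.2⟩
  have hd := hdiff v₀ hv₀K
  rw [hasDerivWithinAt_iff_tendsto_slope, Metric.tendsto_nhdsWithin_nhds] at hd
  intro ε hε
  obtain ⟨ρ, hρ, hslope⟩ := hd ε hε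
  obtain ⟨δ₀, hδ₀, hmass⟩ := mass_small hΓ hα0 hw hab hβ (ε := ρ / 2) (by linarith)
  obtain ⟨δ, hδpos, hinv⟩ := inv_cont hw hinj ht hδ₀
  refine ⟨δ, hδpos, fun θ' hθ' hne hnear => ?_⟩
  obtain ⟨t', ht', rfl⟩ := hθ'
  have htt' : t' ≠ t := fun hh => hne (by rw [hh])
  have hdist : |t' - t| < δ₀ := hinv t' ht' hnear
  -- the staircase values are close
  have key : ∀ s s', s ∈ Icc a₀ b₀ → s' ∈ Icc a₀ b₀ → s ≤ s' → s' - s ≤ δ₀ →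
      SF α w a₀ s' - SF α w a₀ s ≤ ρ / 2 := by
    intro s s' hs hs' hss' hds
    have h1 : massFn α w a₀ s' ≤ massFn α w a₀ s + massFn α w s s' :=
      massFn_subadd hΓ a₀ s s'
    have h2 : massFn α w s s' ≤ ENNReal.ofReal (ρ / 2) := hmass s s' hs hs' hss' hds
    have hfs : massFn α w a₀ s ≠ ⊤ := hfin s hs
    have h2' : massFn α w s s' ≠ ⊤ := (h2.trans_lt ENNReal.ofReal_lt_top).ne
    have h3 : (massFn α w a₀ s').toReal ≤
        (massFn α w a₀ s + massFn α w s s').toReal :=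
      ENNReal.toReal_le_toReal (hfin s' hs') (ENNReal.add_ne_top.mpr ⟨hfs, h2'⟩) |>.mpr h1
    rw [ENNReal.toReal_add hfs h2'] at h3
    have h4 : (massFn α w s s').toReal ≤ ρ / 2 :=
      ENNReal.toReal_le_of_le_ofReal (by linarith) h2
    show (massFn α w a₀ s').toReal - (massFn α w a₀ s).toReal ≤ ρ / 2
    linarith
  have hSd : |SF α w a₀ t' - v₀| ≤ ρ / 2 := by
    rcases le_or_gt t t' with hle | hlt
    · rw [abs_of_nonneg (by linarith [hSmono t t' ht ht' hle])]
      exact key t t' ht ht' hle (by rw [abs_of_nonneg (by linarith)] at hdist; linarith)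
    · rw [abs_of_nonpos (by linarith [hSmono t' t ht' ht hlt.le])]
      have := key t' t ht' ht hlt.le (by rw [abs_of_neg (by linarith)] at hdist; linarith)
      linarith
  set v := SF α w a₀ t' with hvdef
  have hvK : v ∈ Icc (SF α w a₀ a₀) (SF α w a₀ b₀) :=
    ⟨hSmono a₀ t' ha₀mem ht' ht'.1, hSmono t' b₀ ht' hb₀mem ht'.2⟩
  have hvne : v ≠ v₀ := by
    rcases lt_or_gt_of_ne htt' with hlt | hgt
    · exact (hS ht' ht hlt).ne
    · exact (hS ht ht' hgt).ne'
  have hvdist : dist v v₀ < ρ := by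
    rw [Real.dist_eq]
    calc |v - v₀| ≤ ρ / 2 := hSd
      _ < ρ := by linarith
  have hsl := hslope (x := v) ⟨hvK, hvne⟩ hvdist
  rw [slope_def_field, Real.dist_eq] at hsl
  show |(h (w t') - h (w t)) / (J (w t') - J (w t)) - g' (J (w t))| < ε
  rw [hJ t ht, hJ t' ht', ← hg t ht, ← hg t' ht']
  exact hsl
end

section
/- Conjugacy of derivatives (converse direction): let h : F → ℝ be bounded and F^α-differentiable at every θ ∈ F, and let g = φ[h]. Then for every θ ∈ F, g is differentiable at v = J(θ) and g'(J(θ)) = (D_F^α h)(θ). -/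
open Set
open scoped ENNReal

namespace FractalAux

variable {n : ℕ} {α : ℝ} {w : ℝ → EuclideanSpace ℝ (Fin n)}

theorem subdiv_le {a b : ℝ} (P : Subdivision a b) {i j : ℕ} (hij : i ≤ j) (hjk : j ≤ P.k) :
    P.t i ≤ P.t j := by
  induction j with
  | zero => simp_all
  | succ m ih =>
    rcases Nat.lt_or_ge i (m + 1) with hlt | hge
    · exact le_trans (ih (by omega) (by omega)) (le_of_lt (P.mono m hjk))
    · have : i = m + 1 := by omega
      simp [this]

theorem subdiv_lt {a b : ℝ} (P : Subdivision a b) {i j : ℕ} (hij : i < j) (hjk : j ≤ P.k) :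
    P.t i < P.t j := by
  obtain ⟨m, rfl⟩ : ∃ m, j = m + 1 := ⟨j - 1, by omega⟩
  exact lt_of_le_of_lt (subdiv_le P (by omega) (by omega)) (P.mono m hjk)

theorem subdiv_ab {a b : ℝ} (P : Subdivision a b) : a ≤ b := by
  have := subdiv_le P (Nat.zero_le P.k) le_rfl
  rwa [P.first, P.last] at this

theorem sigmaSum_nonneg (hΓ : 0 < Real.Gamma (α + 1)) {a b : ℝ} (P : Subdivision a b) :
    0 ≤ sigmaSum α w P :=
  div_nonneg (Finset.sum_nonneg fun _ _ => Real.rpow_nonneg (norm_nonneg _) α) hΓ.le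

/-- the trivial subdivision of a degenerate interval -/
def trivSub (a : ℝ) : Subdivision a a where
  k := 0
  t := fun _ => a
  first := rfl
  last := rfl
  mono := by intro i hi; omega

theorem trivSub_sigma (a : ℝ) : sigmaSum α w (trivSub a) = 0 := by
  simp [sigmaSum, trivSub]

theorem trivSub_mesh (a δ : ℝ) : (trivSub a).MeshLE δ := by
  intro i hi; simp [trivSub] at hi

/-- one-piece subdivision -/
def oneSub {a b : ℝ} (hab : a < b) : Subdivision a b where
  k := 1
  t := fun i => if i = 0 then a else b
  first := rfl
  last := rfl
  mono := by
    intro i hi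
    have : i = 0 := by omega
    subst this
    simpa

theorem oneSub_sigma {a b : ℝ} (hab : a < b) :
    sigmaSum α w (oneSub hab) = ‖w b - w a‖ ^ α / Real.Gamma (α + 1) := by
  simp [sigmaSum, oneSub]

theorem oneSub_mesh {a b δ : ℝ} (hab : a < b) (h : b - a ≤ δ) : (oneSub hab).MeshLE δ := by
  intro i hi
  have hk : i < 1 := hi
  have : i = 0 := by omega
  subst this
  show (if (1:ℕ) = 0 then a else b) - (if (0:ℕ) = 0 then a else b) ≤ δ
  norm_num
  linarith

/-- concatenation -/
noncomputable def concatT {a b c : ℝ} (P1 : Subdivision a b) (P2 : Subdivision b c)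
    (i : ℕ) : ℝ :=
  if i < P1.k then P1.t i else P2.t (i - P1.k)

theorem concatT_low {a b c : ℝ} (P1 : Subdivision a b) (P2 : Subdivision b c)
    {i : ℕ} (h : i ≤ P1.k) : concatT P1 P2 i = P1.t i := by
  rcases lt_or_eq_of_le h with h' | h'
  · simp [concatT, h']
  · subst h'
    simp [concatT, P2.first, P1.last]

theorem concatT_high {a b c : ℝ} (P1 : Subdivision a b) (P2 : Subdivision b c)
    (i : ℕ) : concatT P1 P2 (P1.k + i) = P2.t i := by
  have : ¬ P1.k + i < P1.k := by omega
  simp [concatT, this]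

noncomputable def concat {a b c : ℝ} (P1 : Subdivision a b) (P2 : Subdivision b c) :
    Subdivision a c where
  k := P1.k + P2.k
  t := concatT P1 P2
  first := by rw [concatT_low _ _ (Nat.zero_le _), P1.first]
  last := by rw [concatT_high, P2.last]
  mono := by
    intro i hi
    rcases Nat.lt_or_ge i P1.k with h | h
    · rw [concatT_low _ _ h.le, concatT_low _ _ (by omega)]
      exact P1.mono i h
    · obtain ⟨m, rfl⟩ : ∃ m, i = P1.k + m := ⟨i - P1.k, by omega⟩
      rw [concatT_high, show P1.k + m + 1 = P1.k + (m + 1) from rfl, concatT_high]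
      exact P2.mono m (by omega)

theorem concat_mesh {a b c δ : ℝ} {P1 : Subdivision a b} {P2 : Subdivision b c}
    (h1 : P1.MeshLE δ) (h2 : P2.MeshLE δ) : (concat P1 P2).MeshLE δ := by
  intro i hi
  have hi' : i < P1.k + P2.k := hi
  show concatT P1 P2 (i + 1) - concatT P1 P2 i ≤ δ
  rcases Nat.lt_or_ge i P1.k with h | h
  · rw [concatT_low _ _ h.le, concatT_low _ _ (by omega)]
    exact h1 i h
  · obtain ⟨m, rfl⟩ : ∃ m, i = P1.k + m := ⟨i - P1.k, by omega⟩
    rw [concatT_high, show P1.k + m + 1 = P1.k + (m + 1) from rfl, concatT_high]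
    exact h2 m (by omega)

theorem concat_sigma {a b c : ℝ} (P1 : Subdivision a b) (P2 : Subdivision b c) :
    sigmaSum α w (concat P1 P2) = sigmaSum α w P1 + sigmaSum α w P2 := by
  unfold sigmaSum
  rw [← add_div]
  congr 1
  have hk : (concat P1 P2).k = P1.k + P2.k := rfl
  rw [hk, Finset.sum_range_add]
  congr 1
  · refine Finset.sum_congr rfl fun i hi => ?_
    rw [Finset.mem_range] at hi
    show ‖w (concatT P1 P2 (i + 1)) - w (concatT P1 P2 i)‖ ^ α = _
    rw [concatT_low _ _ (by omega), concatT_low _ _ (by omega)]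
  · refine Finset.sum_congr rfl fun i hi => ?_
    show ‖w (concatT P1 P2 (P1.k + i + 1)) - w (concatT P1 P2 (P1.k + i))‖ ^ α = _
    rw [show P1.k + i + 1 = P1.k + (i + 1) from rfl, concatT_high, concatT_high]

theorem gamma_antitone {a b δ δ' : ℝ} (h : δ ≤ δ') :
    gammaDelta α w a b δ' ≤ gammaDelta α w a b δ := by
  refine le_iInf fun P => le_iInf fun hP => ?_
  exact iInf₂_le P (fun i hi => (hP i hi).trans h)

theorem gamma_le_mass {a b δ : ℝ} (hδ : 0 < δ) :
    gammaDelta α w a b δ ≤ massFn α w a b :=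
  le_iSup₂ (f := fun δ (_ : 0 < δ) => gammaDelta α w a b δ) δ hδ

/-- γ-level subadditivity (concatenation). -/
theorem gamma_subadd {a b c δ : ℝ} :
    gammaDelta α w a c δ ≤ gammaDelta α w a b δ + gammaDelta α w b c δ := by
  refine ENNReal.le_of_forall_pos_le_add fun ε hε htop => ?_
  set γ1 := gammaDelta α w a b δ with hγ1
  set γ2 := gammaDelta α w b c δ with hγ2
  have h1top : γ1 ≠ ⊤ := fun h => by simp [h] at htop
  have h2top : γ2 ≠ ⊤ := fun h => by simp [h] at htop
  have hεne : (ε : ℝ≥0∞) ≠ 0 := by exact_mod_cast hε.ne'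
  have he2 : ((ε : ℝ≥0∞) / 2) ≠ 0 := by
    simp [ENNReal.div_eq_zero_iff, hεne]
  have h1 : γ1 < γ1 + ε / 2 := ENNReal.lt_add_right h1top he2
  have h2 : γ2 < γ2 + ε / 2 := ENNReal.lt_add_right h2top he2
  rw [hγ1, gammaDelta, iInf_lt_iff] at h1
  obtain ⟨P1, h1⟩ := h1
  rw [iInf_lt_iff] at h1
  obtain ⟨hm1, h1⟩ := h1
  rw [hγ2, gammaDelta, iInf_lt_iff] at h2
  obtain ⟨P2, h2⟩ := h2
  rw [iInf_lt_iff] at h2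
  obtain ⟨hm2, h2⟩ := h2
  have key : gammaDelta α w a c δ ≤ ENNReal.ofReal (sigmaSum α w (concat P1 P2)) :=
    iInf₂_le (concat P1 P2) (concat_mesh hm1 hm2)
  rw [concat_sigma] at key
  calc gammaDelta α w a c δ
      ≤ ENNReal.ofReal (sigmaSum α w P1 + sigmaSum α w P2) := key
    _ ≤ ENNReal.ofReal (sigmaSum α w P1) + ENNReal.ofReal (sigmaSum α w P2) :=
        ENNReal.ofReal_add_le
    _ ≤ (γ1 + ε / 2) + (γ2 + ε / 2) := add_le_add h1.le h2.le
    _ = γ1 + γ2 + ε := by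
        rw [add_add_add_comm, ENNReal.add_halves]

section Split

variable {a b c : ℝ}

/-- left part of a split subdivision -/
noncomputable def leftSub (P : Subdivision a c) (b : ℝ) {j : ℕ}
    (hjlt : j < P.k) (hj0 : P.t j < b) : Subdivision a b where
  k := j + 1
  t := fun i => if i < j + 1 then P.t i else b
  first := by simp [P.first]
  last := by simp
  mono := by
    intro i hi
    by_cases h2 : i + 1 < j + 1
    · simp only [if_pos (show i < j + 1 by omega), if_pos h2]
      exact P.mono i (by omega)
    · simp only [if_pos (show i < j + 1 by omega), if_neg h2]
      have hij : i = j := by omega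
      rw [hij]
      exact hj0

theorem leftSub_mesh {δ : ℝ} (P : Subdivision a c) {j : ℕ}
    (hjlt : j < P.k) (hj0 : P.t j < b) (hb1 : b ≤ P.t (j + 1)) (hP : P.MeshLE δ) :
    (leftSub P b hjlt hj0).MeshLE δ := by
  intro i hi
  have hi' : i < j + 1 := hi
  show (if i + 1 < j + 1 then P.t (i + 1) else b) - (if i < j + 1 then P.t i else b) ≤ δ
  by_cases h2 : i + 1 < j + 1
  · simp only [if_pos (show i < j + 1 by omega), if_pos h2]
    exact hP i (by omega)
  · simp only [if_pos (show i < j + 1 by omega), if_neg h2]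
    have hij : i = j := by omega
    rw [hij]
    have h3 := hP j hjlt
    linarith

theorem leftSub_sigma (P : Subdivision a c) {j : ℕ}
    (hjlt : j < P.k) (hj0 : P.t j < b) :
    sigmaSum α w (leftSub P b hjlt hj0) =
      ((∑ i ∈ Finset.range j, ‖w (P.t (i + 1)) - w (P.t i)‖ ^ α) +
        ‖w b - w (P.t j)‖ ^ α) / Real.Gamma (α + 1) := by
  unfold sigmaSum
  congr 1
  have hk : (leftSub P b hjlt hj0).k = j + 1 := rfl
  rw [hk, Finset.sum_range_succ]
  congr 1
  · refine Finset.sum_congr rfl fun i hi => ?_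
    rw [Finset.mem_range] at hi
    show ‖w (if i + 1 < j + 1 then P.t (i + 1) else b) -
        w (if i < j + 1 then P.t i else b)‖ ^ α = _
    rw [if_pos (show i + 1 < j + 1 by omega), if_pos (show i < j + 1 by omega)]
  · show ‖w (if j + 1 < j + 1 then P.t (j + 1) else b) -
        w (if j < j + 1 then P.t j else b)‖ ^ α = _
    rw [if_neg (by omega), if_pos (by omega)]

/-- right part, case where b is a subdivision point -/
noncomputable def rightSubA (P : Subdivision a c) {j : ℕ}
    (hjlt : j < P.k) (hbj : P.t (j + 1) = b) : Subdivision b c where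
  k := P.k - (j + 1)
  t := fun i => P.t (i + (j + 1))
  first := by simpa using hbj
  last := by
    show P.t (P.k - (j + 1) + (j + 1)) = c
    rw [show P.k - (j + 1) + (j + 1) = P.k by omega, P.last]
  mono := by
    intro i hi
    have h := P.mono (i + (j + 1)) (by omega)
    have e : i + (j + 1) + 1 = i + 1 + (j + 1) := by omega
    rwa [e] at h

theorem rightSubA_mesh {δ : ℝ} (P : Subdivision a c) {j : ℕ}
    (hjlt : j < P.k) (hbj : P.t (j + 1) = b) (hP : P.MeshLE δ) :
    (rightSubA P hjlt hbj).MeshLE δ := by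
  intro i hi
  have hi' : i < P.k - (j + 1) := hi
  show P.t (i + 1 + (j + 1)) - P.t (i + (j + 1)) ≤ δ
  have h := hP (i + (j + 1)) (by omega)
  have e : i + (j + 1) + 1 = i + 1 + (j + 1) := by omega
  rwa [e] at h

theorem rightSubA_sigma (P : Subdivision a c) {j : ℕ}
    (hjlt : j < P.k) (hbj : P.t (j + 1) = b) :
    sigmaSum α w (rightSubA P hjlt hbj) =
      (∑ i ∈ Finset.range (P.k - (j + 1)),
        ‖w (P.t ((j + 1) + i + 1)) - w (P.t ((j + 1) + i))‖ ^ α) / Real.Gamma (α + 1) := by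
  unfold sigmaSum
  congr 1
  refine Finset.sum_congr rfl fun i hi => ?_
  show ‖w (P.t (i + 1 + (j + 1))) - w (P.t (i + (j + 1)))‖ ^ α = _
  rw [show i + 1 + (j + 1) = (j + 1) + i + 1 by omega, show i + (j + 1) = (j + 1) + i by omega]

/-- right part, case where b is strictly interior to a piece -/
noncomputable def rightSubB (P : Subdivision a c) (b : ℝ) {j : ℕ}
    (hjlt : j < P.k) (hbj : b < P.t (j + 1)) (hb : a < b) : Subdivision b c where
  k := P.k - j
  t := fun i => if i = 0 then b else P.t (i + j)
  first := by simp
  last := by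
    show (if P.k - j = 0 then b else P.t (P.k - j + j)) = c
    rw [if_neg (by omega), show P.k - j + j = P.k by omega, P.last]
  mono := by
    intro i hi
    match i with
    | 0 =>
      show b < P.t (0 + 1 + j)
      rwa [show 0 + 1 + j = j + 1 by omega]
    | (m + 1) =>
      show P.t (m + 1 + j) < P.t (m + 1 + 1 + j)
      have h := P.mono (m + 1 + j) (by omega)
      have e : m + 1 + j + 1 = m + 1 + 1 + j := by omega
      rwa [e] at h

theorem rightSubB_mesh {δ : ℝ} (P : Subdivision a c) {j : ℕ}
    (hjlt : j < P.k) (hbj : b < P.t (j + 1)) (hb : a < b) (hj0 : P.t j < b)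
    (hP : P.MeshLE δ) : (rightSubB P b hjlt hbj hb).MeshLE δ := by
  intro i hi
  have hi' : i < P.k - j := hi
  match i with
  | 0 =>
    show P.t (0 + 1 + j) - b ≤ δ
    have h := hP j hjlt
    rw [show 0 + 1 + j = j + 1 by omega]
    linarith
  | (m + 1) =>
    show P.t (m + 1 + 1 + j) - P.t (m + 1 + j) ≤ δ
    have h := hP (m + 1 + j) (by omega)
    have e : m + 1 + j + 1 = m + 1 + 1 + j := by omega
    rwa [e] at h

theorem rightSubB_sigma (P : Subdivision a c) {j : ℕ}
    (hjlt : j < P.k) (hbj : b < P.t (j + 1)) (hb : a < b) :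
    sigmaSum α w (rightSubB P b hjlt hbj hb) =
      (‖w (P.t (j + 1)) - w b‖ ^ α +
        ∑ i ∈ Finset.range (P.k - (j + 1)),
          ‖w (P.t ((j + 1) + i + 1)) - w (P.t ((j + 1) + i))‖ ^ α) / Real.Gamma (α + 1) := by
  unfold sigmaSum
  congr 1
  have hk : (rightSubB P b hjlt hbj hb).k = P.k - j := rfl
  rw [hk, show P.k - j = 1 + (P.k - (j + 1)) by omega, Finset.sum_range_add]
  congr 1
  · rw [Finset.sum_range_one]
    show ‖w (P.t (0 + 1 + j)) - w b‖ ^ α = _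
    rw [show 0 + 1 + j = j + 1 by omega]
  · refine Finset.sum_congr rfl fun i hi => ?_
    have h1 : (rightSubB P b hjlt hbj hb).t (1 + i) = P.t (1 + i + j) := by
      show (if 1 + i = 0 then b else P.t (1 + i + j)) = _
      rw [if_neg (by omega)]
    have h2 : (rightSubB P b hjlt hbj hb).t (1 + i + 1) = P.t (1 + i + 1 + j) := by
      show (if 1 + i + 1 = 0 then b else P.t (1 + i + 1 + j)) = _
      rw [if_neg (by omega)]
    rw [h1, h2, show 1 + i + 1 + j = (j + 1) + i + 1 by omega,
      show 1 + i + j = (j + 1) + i by omega]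

/-- The splitting lemma. -/
theorem split_exists (hΓ : 0 < Real.Gamma (α + 1)) {a b c δ ε : ℝ}
    (hab : a ≤ b) (hbc : b ≤ c) (hε : 0 ≤ ε)
    (P : Subdivision a c) (hP : P.MeshLE δ)
    (hω : ∀ s u : ℝ, a ≤ s → s ≤ u → u ≤ c → u - s ≤ δ → ‖w u - w s‖ ^ α ≤ ε) :
    ∃ (P1 : Subdivision a b) (P2 : Subdivision b c), P1.MeshLE δ ∧ P2.MeshLE δ ∧
      sigmaSum α w P1 + sigmaSum α w P2 ≤ sigmaSum α w P + 2 * ε / Real.Gamma (α + 1) := by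
  have h2ε : 0 ≤ 2 * ε / Real.Gamma (α + 1) := div_nonneg (by linarith) hΓ.le
  rcases eq_or_lt_of_le hab with rfl | hab'
  · exact ⟨trivSub a, P, trivSub_mesh a δ, hP, by rw [trivSub_sigma, zero_add]; linarith⟩
  rcases eq_or_lt_of_le hbc with rfl | hbc'
  · exact ⟨P, trivSub b, hP, trivSub_mesh b δ, by rw [trivSub_sigma, add_zero]; linarith⟩
  classical
  set j := Nat.findGreatest (fun i => P.t i < b) P.k with hjdef
  have hjk : j ≤ P.k := Nat.findGreatest_le P.k
  have hj0 : P.t j < b := by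
    have h0 : P.t 0 < b := by rw [P.first]; exact hab'
    exact Nat.findGreatest_spec (P := fun i => P.t i < b) (Nat.zero_le _) h0
  have hjlt : j < P.k := by
    rcases eq_or_lt_of_le hjk with h | h
    · exfalso
      rw [h, P.last] at hj0
      linarith
    · exact h
  have hb1 : b ≤ P.t (j + 1) := by
    by_contra hc
    exact Nat.findGreatest_is_greatest (P := fun i => P.t i < b)
      (Nat.lt_succ_self j) (by omega) (by linarith)
  have hgapj : P.t (j + 1) - P.t j ≤ δ := hP j hjlt
  have hta : a ≤ P.t j := by
    have := subdiv_le P (Nat.zero_le j) (by omega)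
    rwa [P.first] at this
  have htc : P.t (j + 1) ≤ c := by
    have := subdiv_le P (show j + 1 ≤ P.k by omega) le_rfl
    rwa [P.last] at this
  -- σP splits as range j + term j + tail
  have hσP : sigmaSum α w P =
      ((∑ i ∈ Finset.range j, ‖w (P.t (i + 1)) - w (P.t i)‖ ^ α) +
        ‖w (P.t (j + 1)) - w (P.t j)‖ ^ α +
        ∑ i ∈ Finset.range (P.k - (j + 1)),
          ‖w (P.t ((j + 1) + i + 1)) - w (P.t ((j + 1) + i))‖ ^ α) / Real.Gamma (α + 1) := by
    unfold sigmaSum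
    congr 1
    obtain ⟨r, hr⟩ : ∃ r, P.k = (j + 1) + r := ⟨P.k - (j + 1), by omega⟩
    rw [show P.k - (j + 1) = r by omega, hr, Finset.sum_range_add, Finset.sum_range_succ]
  rcases eq_or_lt_of_le hb1 with hbeq | hblt
  · -- case A : P.t (j+1) = b
    have hbeq' : P.t (j + 1) = b := hbeq.symm
    refine ⟨leftSub P b hjlt hj0, rightSubA P hjlt hbeq',
      leftSub_mesh P hjlt hj0 hb1 hP, rightSubA_mesh P hjlt hbeq' hP, ?_⟩
    rw [leftSub_sigma, rightSubA_sigma, hσP, hbeq', ← add_div]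
    exact le_add_of_nonneg_right h2ε
  · -- case B : b < P.t (j+1)
    refine ⟨leftSub P b hjlt hj0, rightSubB P b hjlt hblt hab',
      leftSub_mesh P hjlt hj0 hb1 hP, rightSubB_mesh P hjlt hblt hab' hj0 hP, ?_⟩
    rw [leftSub_sigma, rightSubB_sigma, hσP]
    have e1 : ‖w b - w (P.t j)‖ ^ α ≤ ε :=
      hω (P.t j) b hta hj0.le (le_trans hb1 htc) (by linarith)
    have e2 : ‖w (P.t (j + 1)) - w b‖ ^ α ≤ ε :=
      hω b (P.t (j + 1)) hab'.le hb1 htc (by linarith)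
    have e3 : 0 ≤ ‖w (P.t (j + 1)) - w (P.t j)‖ ^ α := Real.rpow_nonneg (norm_nonneg _) α
    rw [← add_div, ← add_div, div_le_div_iff_of_pos_right hΓ]
    linarith

end Split

section Mass

variable {a₀ b₀ : ℝ}

theorem omega_exists (hw : ContinuousOn w (Icc a₀ b₀)) (hα : 1 ≤ α)
    {ε : ℝ} (hε : 0 < ε) :
    ∃ δ > (0 : ℝ), ∀ s u : ℝ, s ∈ Icc a₀ b₀ → u ∈ Icc a₀ b₀ → |u - s| ≤ δ →
      ‖w u - w s‖ ^ α ≤ ε := by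
  have hα0 : (0 : ℝ) < α := by linarith
  have huc : UniformContinuousOn w (Icc a₀ b₀) :=
    isCompact_Icc.uniformContinuousOn_of_continuous hw
  have hε' : 0 < ε ^ (1 / α) := Real.rpow_pos_of_pos hε _
  obtain ⟨δ', hδ', H⟩ := (Metric.uniformContinuousOn_iff).mp huc _ hε'
  refine ⟨δ' / 2, by linarith, fun s u hs hu hd => ?_⟩
  have h1 : dist (w u) (w s) < ε ^ (1 / α) := by
    refine H u hu s hs ?_
    rw [Real.dist_eq]
    linarith
  have h2 : ‖w u - w s‖ ^ α ≤ (ε ^ (1 / α)) ^ α := by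
    rw [dist_eq_norm] at h1
    exact Real.rpow_le_rpow (norm_nonneg _) h1.le hα0.le
  calc ‖w u - w s‖ ^ α ≤ (ε ^ (1 / α)) ^ α := h2
    _ = ε := by
        rw [← Real.rpow_mul hε.le, one_div_mul_cancel hα0.ne', Real.rpow_one]

theorem mass_superadd (hw : ContinuousOn w (Icc a₀ b₀)) (hα : 1 ≤ α)
    (hΓ : 0 < Real.Gamma (α + 1)) {a b c : ℝ}
    (h0a : a₀ ≤ a) (hab : a ≤ b) (hbc : b ≤ c) (hcb : c ≤ b₀) :
    massFn α w a b + massFn α w b c ≤ massFn α w a c := by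
  refine ENNReal.le_of_forall_pos_le_add fun ε hε _ => ?_
  have hεR : (0 : ℝ) < (ε : ℝ) := hε
  set ε' : ℝ := (ε : ℝ) * Real.Gamma (α + 1) / 2 with hε'def
  have hε'pos : 0 < ε' := by positivity
  obtain ⟨δε, hδε, hω⟩ := omega_exists hw hα hε'pos
  have key : ∀ δ' : ℝ, 0 < δ' →
      gammaDelta α w a b δ' + gammaDelta α w b c δ' ≤ massFn α w a c + ε := by
    intro δ' hδ'
    set δ := min δ' δε with hδdef
    have hδpos : 0 < δ := lt_min hδ' hδε
    have hω' : ∀ s u : ℝ, a ≤ s → s ≤ u → u ≤ c → u - s ≤ δ → ‖w u - w s‖ ^ α ≤ ε' := by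
      intro s u h1 h2 h3 h4
      refine hω s u ⟨h0a.trans h1, (h2.trans h3).trans hcb⟩
        ⟨h0a.trans (h1.trans h2), h3.trans hcb⟩ ?_
      rw [abs_of_nonneg (by linarith)]
      calc u - s ≤ δ := h4
        _ ≤ δε := min_le_right _ _
    have hsplit : gammaDelta α w a b δ + gammaDelta α w b c δ ≤
        gammaDelta α w a c δ + ENNReal.ofReal (2 * ε' / Real.Gamma (α + 1)) := by
      rw [← tsub_le_iff_right]
      refine le_iInf fun P => le_iInf fun hP => ?_
      rw [tsub_le_iff_right]
      obtain ⟨P1, P2, hm1, hm2, hσ⟩ := split_exists hΓ hab hbc hε'pos.le P hP hω'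
      calc gammaDelta α w a b δ + gammaDelta α w b c δ
          ≤ ENNReal.ofReal (sigmaSum α w P1) + ENNReal.ofReal (sigmaSum α w P2) :=
            add_le_add (iInf₂_le P1 hm1) (iInf₂_le P2 hm2)
        _ = ENNReal.ofReal (sigmaSum α w P1 + sigmaSum α w P2) :=
            (ENNReal.ofReal_add (sigmaSum_nonneg hΓ P1) (sigmaSum_nonneg hΓ P2)).symm
        _ ≤ ENNReal.ofReal (sigmaSum α w P + 2 * ε' / Real.Gamma (α + 1)) :=
            ENNReal.ofReal_le_ofReal hσ
        _ ≤ ENNReal.ofReal (sigmaSum α w P) + ENNReal.ofReal (2 * ε' / Real.Gamma (α + 1)) :=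
            ENNReal.ofReal_add_le
    have hεeq : ENNReal.ofReal (2 * ε' / Real.Gamma (α + 1)) = (ε : ℝ≥0∞) := by
      rw [hε'def, show 2 * ((ε : ℝ) * Real.Gamma (α + 1) / 2) / Real.Gamma (α + 1) = (ε : ℝ)
        by field_simp, ENNReal.ofReal_coe_nnreal]
    calc gammaDelta α w a b δ' + gammaDelta α w b c δ'
        ≤ gammaDelta α w a b δ + gammaDelta α w b c δ :=
          add_le_add (gamma_antitone (min_le_left _ _)) (gamma_antitone (min_le_left _ _))
      _ ≤ gammaDelta α w a c δ + ENNReal.ofReal (2 * ε' / Real.Gamma (α + 1)) := hsplit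
      _ ≤ massFn α w a c + ε := by
          rw [hεeq]
          exact add_le_add (gamma_le_mass hδpos) le_rfl
  have h1 : massFn α w a b = ⨆ δ : {δ : ℝ // 0 < δ}, gammaDelta α w a b δ.1 := by
    rw [massFn, iSup_subtype']
  have h2 : massFn α w b c = ⨆ δ : {δ : ℝ // 0 < δ}, gammaDelta α w b c δ.1 := by
    rw [massFn, iSup_subtype']
  rw [h1, h2]
  haveI : Nonempty {δ : ℝ // 0 < δ} := ⟨⟨1, one_pos⟩⟩
  refine ENNReal.iSup_add_iSup_le fun i j => ?_
  set δ' := min i.1 j.1 with hδ'def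
  have hδ'pos : 0 < δ' := lt_min i.2 j.2
  calc gammaDelta α w a b i.1 + gammaDelta α w b c j.1
      ≤ gammaDelta α w a b δ' + gammaDelta α w b c δ' :=
        add_le_add (gamma_antitone (min_le_left _ _)) (gamma_antitone (min_le_right _ _))
    _ ≤ massFn α w a c + ε := key δ' hδ'pos

theorem mass_subadd {a b c : ℝ} :
    massFn α w a c ≤ massFn α w a b + massFn α w b c := by
  refine iSup₂_le fun δ hδ => ?_
  exact le_trans gamma_subadd (add_le_add (gamma_le_mass hδ) (gamma_le_mass hδ))

theorem mass_fin (hw : ContinuousOn w (Icc a₀ b₀)) (hα : 1 ≤ α)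
    (hΓ : 0 < Real.Gamma (α + 1))
    (hfin : ∀ t ∈ Icc a₀ b₀, massFn α w a₀ t ≠ ⊤) {a b : ℝ}
    (h0a : a₀ ≤ a) (hab : a ≤ b) (hb0 : b ≤ b₀) : massFn α w a b ≠ ⊤ := by
  refine ne_top_of_le_ne_top (hfin b ⟨h0a.trans hab, hb0⟩) ?_
  exact le_trans le_add_self (mass_superadd hw hα hΓ le_rfl h0a hab hb0)

/-- right-continuity of the mass near `t` -/
theorem mass_right_cont (hw : ContinuousOn w (Icc a₀ b₀)) (hα : 1 ≤ α)
    (hΓ : 0 < Real.Gamma (α + 1))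
    (hfin : ∀ t ∈ Icc a₀ b₀, massFn α w a₀ t ≠ ⊤)
    {t : ℝ} (ht : a₀ ≤ t) (ht' : t < b₀) {ε : ℝ} (hε : 0 < ε) :
    ∃ s₁, t < s₁ ∧ s₁ ≤ b₀ ∧ ∀ s, t < s → s ≤ s₁ →
      massFn α w t s ≤ ENNReal.ofReal ε := by
  set ε2 := ε / 2 with hε2def
  have hε2 : 0 < ε2 := by rw [hε2def]; linarith
  obtain ⟨δ1, hδ1, hω⟩ := omega_exists hw hα (mul_pos hε2 hΓ)
  have hfin' : massFn α w t b₀ ≠ ⊤ := mass_fin hw hα hΓ hfin ht ht'.le le_rfl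
  -- choose δ0
  obtain ⟨δ0, hδ0pos, hδ0le, hδ0⟩ : ∃ δ0, 0 < δ0 ∧ δ0 ≤ δ1 ∧
      massFn α w t b₀ ≤ gammaDelta α w t b₀ δ0 + ENNReal.ofReal ε2 := by
    by_cases h0 : massFn α w t b₀ = 0
    · exact ⟨δ1, hδ1, le_rfl, by rw [h0]; exact zero_le⟩
    · have hlt : massFn α w t b₀ - ENNReal.ofReal ε2 < massFn α w t b₀ :=
        ENNReal.sub_lt_self hfin' h0 (by simp [ENNReal.ofReal_eq_zero]; linarith)
      have h2 : massFn α w t b₀ - ENNReal.ofReal ε2 <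
          ⨆ (δ : ℝ) (_ : 0 < δ), gammaDelta α w t b₀ δ := hlt
      rw [lt_iSup_iff] at h2
      obtain ⟨δ, h2⟩ := h2
      rw [lt_iSup_iff] at h2
      obtain ⟨hδ, h2⟩ := h2
      refine ⟨min δ δ1, lt_min hδ hδ1, min_le_right _ _, ?_⟩
      rw [← tsub_le_iff_right]
      exact le_trans h2.le (gamma_antitone (min_le_left _ _))
  -- a subdivision with small mesh exists
  have hγfin : gammaDelta α w t b₀ δ0 ≠ ⊤ :=
    ne_top_of_le_ne_top hfin' (gamma_le_mass hδ0pos)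
  have hγlt : (⨅ (P : Subdivision t b₀) (_ : P.MeshLE δ0),
      ENNReal.ofReal (sigmaSum α w P)) < ⊤ := hγfin.lt_top
  rw [iInf_lt_iff] at hγlt
  obtain ⟨P, hγlt⟩ := hγlt
  rw [iInf_lt_iff] at hγlt
  obtain ⟨hPmesh, -⟩ := hγlt
  have hk : 0 < P.k := by
    rcases Nat.eq_zero_or_pos P.k with h | h
    · exfalso
      have h2 := P.last
      rw [h, P.first] at h2
      linarith
    · exact h
  set s₁ := P.t 1 with hs₁def
  have hts₁ : t < s₁ := by
    have h2 := P.mono 0 hk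
    rwa [P.first] at h2
  have hs₁b : s₁ ≤ b₀ := by
    have h2 := subdiv_le P hk le_rfl
    rwa [P.last] at h2
  have hgap : s₁ - t ≤ δ0 := by
    have h2 := hPmesh 0 hk
    rwa [P.first] at h2
  -- one-piece subdivision is small
  have honeσ : sigmaSum α w (oneSub hts₁) ≤ ε2 := by
    rw [oneSub_sigma, div_le_iff₀ hΓ]
    refine hω t s₁ ⟨ht, hts₁.le.trans hs₁b⟩ ⟨ht.trans hts₁.le, hs₁b⟩ ?_
    rw [abs_of_nonneg (by linarith : (0:ℝ) ≤ s₁ - t)]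
    linarith
  have hcut : gammaDelta α w t b₀ δ0 ≤
      ENNReal.ofReal ε2 + gammaDelta α w s₁ b₀ δ0 := by
    refine le_trans gamma_subadd (add_le_add ?_ le_rfl)
    refine le_trans (iInf₂_le (oneSub hts₁) (oneSub_mesh hts₁ hgap)) ?_
    exact ENNReal.ofReal_le_ofReal honeσ
  have hfin2 : massFn α w s₁ b₀ ≠ ⊤ :=
    mass_fin hw hα hΓ hfin (ht.trans hts₁.le) hs₁b le_rfl
  have main : massFn α w t s₁ + massFn α w s₁ b₀ ≤
      ENNReal.ofReal ε + massFn α w s₁ b₀ := by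
    calc massFn α w t s₁ + massFn α w s₁ b₀
        ≤ massFn α w t b₀ :=
          mass_superadd hw hα hΓ ht hts₁.le hs₁b le_rfl
      _ ≤ gammaDelta α w t b₀ δ0 + ENNReal.ofReal ε2 := hδ0
      _ ≤ (ENNReal.ofReal ε2 + gammaDelta α w s₁ b₀ δ0) + ENNReal.ofReal ε2 :=
          add_le_add hcut le_rfl
      _ ≤ (ENNReal.ofReal ε2 + massFn α w s₁ b₀) + ENNReal.ofReal ε2 :=
          add_le_add (add_le_add le_rfl (gamma_le_mass hδ0pos)) le_rfl
      _ = (ENNReal.ofReal ε2 + ENNReal.ofReal ε2) + massFn α w s₁ b₀ := by ring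
      _ = ENNReal.ofReal ε + massFn α w s₁ b₀ := by
          rw [← ENNReal.ofReal_add hε2.le hε2.le]
          congr 1
          rw [hε2def]
          ring_nf
  have hkey : massFn α w t s₁ ≤ ENNReal.ofReal ε :=
    (ENNReal.add_le_add_iff_right hfin2).mp main
  refine ⟨s₁, hts₁, hs₁b, fun s hs hss => ?_⟩
  calc massFn α w t s ≤ massFn α w t s + massFn α w s s₁ := le_self_add
    _ ≤ massFn α w t s₁ := mass_superadd hw hα hΓ ht hs.le hss hs₁b
    _ ≤ ENNReal.ofReal ε := hkey

/-- left-continuity of the mass near `t` -/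
theorem mass_left_cont (hw : ContinuousOn w (Icc a₀ b₀)) (hα : 1 ≤ α)
    (hΓ : 0 < Real.Gamma (α + 1))
    (hfin : ∀ t ∈ Icc a₀ b₀, massFn α w a₀ t ≠ ⊤)
    {t : ℝ} (ht : a₀ < t) (ht' : t ≤ b₀) {ε : ℝ} (hε : 0 < ε) :
    ∃ s₁, a₀ ≤ s₁ ∧ s₁ < t ∧ ∀ s, s₁ ≤ s → s < t →
      massFn α w s t ≤ ENNReal.ofReal ε := by
  set ε2 := ε / 2 with hε2def
  have hε2 : 0 < ε2 := by rw [hε2def]; linarith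
  obtain ⟨δ1, hδ1, hω⟩ := omega_exists hw hα (mul_pos hε2 hΓ)
  have hfin' : massFn α w a₀ t ≠ ⊤ := hfin t ⟨ht.le, ht'⟩
  obtain ⟨δ0, hδ0pos, hδ0le, hδ0⟩ : ∃ δ0, 0 < δ0 ∧ δ0 ≤ δ1 ∧
      massFn α w a₀ t ≤ gammaDelta α w a₀ t δ0 + ENNReal.ofReal ε2 := by
    by_cases h0 : massFn α w a₀ t = 0
    · exact ⟨δ1, hδ1, le_rfl, by rw [h0]; exact zero_le⟩
    · have hlt : massFn α w a₀ t - ENNReal.ofReal ε2 < massFn α w a₀ t :=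
        ENNReal.sub_lt_self hfin' h0 (by simp [ENNReal.ofReal_eq_zero]; linarith)
      have h2 : massFn α w a₀ t - ENNReal.ofReal ε2 <
          ⨆ (δ : ℝ) (_ : 0 < δ), gammaDelta α w a₀ t δ := hlt
      rw [lt_iSup_iff] at h2
      obtain ⟨δ, h2⟩ := h2
      rw [lt_iSup_iff] at h2
      obtain ⟨hδ, h2⟩ := h2
      refine ⟨min δ δ1, lt_min hδ hδ1, min_le_right _ _, ?_⟩
      rw [← tsub_le_iff_right]
      exact le_trans h2.le (gamma_antitone (min_le_left _ _))
  have hγfin : gammaDelta α w a₀ t δ0 ≠ ⊤ :=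
    ne_top_of_le_ne_top hfin' (gamma_le_mass hδ0pos)
  have hγlt : (⨅ (P : Subdivision a₀ t) (_ : P.MeshLE δ0),
      ENNReal.ofReal (sigmaSum α w P)) < ⊤ := hγfin.lt_top
  rw [iInf_lt_iff] at hγlt
  obtain ⟨P, hγlt⟩ := hγlt
  rw [iInf_lt_iff] at hγlt
  obtain ⟨hPmesh, -⟩ := hγlt
  have hk : 0 < P.k := by
    rcases Nat.eq_zero_or_pos P.k with h | h
    · exfalso
      have h2 := P.last
      rw [h, P.first] at h2
      linarith
    · exact h
  set s₁ := P.t (P.k - 1) with hs₁def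
  have hs₁t : s₁ < t := by
    have h2 := subdiv_lt P (show P.k - 1 < P.k by omega) le_rfl
    rwa [P.last] at h2
  have ha₀s₁ : a₀ ≤ s₁ := by
    have h2 := subdiv_le P (Nat.zero_le (P.k - 1)) (by omega)
    rwa [P.first] at h2
  have hgap : t - s₁ ≤ δ0 := by
    have h2 := hPmesh (P.k - 1) (by omega)
    rwa [show P.k - 1 + 1 = P.k by omega, P.last] at h2
  have honeσ : sigmaSum α w (oneSub hs₁t) ≤ ε2 := by
    rw [oneSub_sigma, div_le_iff₀ hΓ]
    refine hω s₁ t ⟨ha₀s₁, hs₁t.le.trans ht'⟩ ⟨ht.le.trans' (le_refl a₀) |>.trans' le_rfl |>.trans' le_rfl, ht'⟩ ?_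
    rw [abs_of_nonneg (by linarith : (0:ℝ) ≤ t - s₁)]
    linarith
  have hcut : gammaDelta α w a₀ t δ0 ≤
      gammaDelta α w a₀ s₁ δ0 + ENNReal.ofReal ε2 := by
    refine le_trans gamma_subadd (add_le_add le_rfl ?_)
    refine le_trans (iInf₂_le (oneSub hs₁t) (oneSub_mesh hs₁t hgap)) ?_
    exact ENNReal.ofReal_le_ofReal honeσ
  have hfin2 : massFn α w a₀ s₁ ≠ ⊤ := hfin s₁ ⟨ha₀s₁, hs₁t.le.trans ht'⟩
  have main : massFn α w s₁ t + massFn α w a₀ s₁ ≤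
      ENNReal.ofReal ε + massFn α w a₀ s₁ := by
    calc massFn α w s₁ t + massFn α w a₀ s₁
        = massFn α w a₀ s₁ + massFn α w s₁ t := by ring
      _ ≤ massFn α w a₀ t :=
          mass_superadd hw hα hΓ le_rfl ha₀s₁ hs₁t.le ht'
      _ ≤ gammaDelta α w a₀ t δ0 + ENNReal.ofReal ε2 := hδ0
      _ ≤ (gammaDelta α w a₀ s₁ δ0 + ENNReal.ofReal ε2) + ENNReal.ofReal ε2 :=
          add_le_add hcut le_rfl
      _ ≤ (massFn α w a₀ s₁ + ENNReal.ofReal ε2) + ENNReal.ofReal ε2 :=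
          add_le_add (add_le_add (gamma_le_mass hδ0pos) le_rfl) le_rfl
      _ = (ENNReal.ofReal ε2 + ENNReal.ofReal ε2) + massFn α w a₀ s₁ := by ring
      _ = ENNReal.ofReal ε + massFn α w a₀ s₁ := by
          rw [← ENNReal.ofReal_add hε2.le hε2.le]
          congr 1
          rw [hε2def]
          ring_nf
  have hkey : massFn α w s₁ t ≤ ENNReal.ofReal ε :=
    (ENNReal.add_le_add_iff_right hfin2).mp main
  refine ⟨s₁, ha₀s₁, hs₁t, fun s hs hst => ?_⟩
  calc massFn α w s t ≤ massFn α w s₁ s + massFn α w s t := le_add_self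
    _ ≤ massFn α w s₁ t := mass_superadd hw hα hΓ ha₀s₁ hs hst.le ht'
    _ ≤ ENNReal.ofReal ε := hkey

/-- the staircase function is continuous on the interval -/
theorem SF_contOn (hw : ContinuousOn w (Icc a₀ b₀)) (hα : 1 ≤ α)
    (hfin : ∀ t ∈ Icc a₀ b₀, massFn α w a₀ t ≠ ⊤) :
    ContinuousOn (SF α w a₀) (Icc a₀ b₀) := by
  have hΓ : 0 < Real.Gamma (α + 1) := Real.Gamma_pos_of_pos (by linarith)
  intro t ht
  rw [Metric.continuousWithinAt_iff]
  intro ε hε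
  have hε2 : 0 < ε / 2 := by linarith
  have hbound : ∀ s ∈ Icc a₀ b₀, massFn α w t s ≤ ENNReal.ofReal (ε / 2) → t ≤ s →
      dist (SF α w a₀ s) (SF α w a₀ t) < ε := by
    intro s hs hm hts
    have hfs : massFn α w a₀ s ≠ ⊤ := hfin s hs
    have hft : massFn α w a₀ t ≠ ⊤ := hfin t ht
    have hup : massFn α w a₀ s ≤ massFn α w a₀ t + ENNReal.ofReal (ε / 2) :=
      le_trans mass_subadd (add_le_add le_rfl hm)
    have hlow : massFn α w a₀ t ≤ massFn α w a₀ s :=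
      le_trans le_self_add (mass_superadd hw hα hΓ le_rfl ht.1 hts hs.2)
    have h1 : SF α w a₀ s ≤ SF α w a₀ t + ε / 2 := by
      have := ENNReal.toReal_mono (by
        exact ENNReal.add_ne_top.mpr ⟨hft, ENNReal.ofReal_ne_top⟩) hup
      rwa [ENNReal.toReal_add hft ENNReal.ofReal_ne_top,
        ENNReal.toReal_ofReal hε2.le] at this
    have h2 : SF α w a₀ t ≤ SF α w a₀ s := ENNReal.toReal_mono hfs hlow
    rw [Real.dist_eq]
    simp only [SF] at h1 h2 ⊢
    rw [abs_of_nonneg (by linarith)]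
    linarith
  have hboundL : ∀ s ∈ Icc a₀ b₀, massFn α w s t ≤ ENNReal.ofReal (ε / 2) → s ≤ t →
      dist (SF α w a₀ s) (SF α w a₀ t) < ε := by
    intro s hs hm hst
    have hfs : massFn α w a₀ s ≠ ⊤ := hfin s hs
    have hft : massFn α w a₀ t ≠ ⊤ := hfin t ht
    have hup : massFn α w a₀ t ≤ massFn α w a₀ s + ENNReal.ofReal (ε / 2) :=
      le_trans mass_subadd (add_le_add le_rfl hm)
    have hlow : massFn α w a₀ s ≤ massFn α w a₀ t :=
      le_trans le_self_add (mass_superadd hw hα hΓ le_rfl hs.1 hst ht.2)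
    have h1 : SF α w a₀ t ≤ SF α w a₀ s + ε / 2 := by
      have := ENNReal.toReal_mono (by
        exact ENNReal.add_ne_top.mpr ⟨hfs, ENNReal.ofReal_ne_top⟩) hup
      rwa [ENNReal.toReal_add hfs ENNReal.ofReal_ne_top,
        ENNReal.toReal_ofReal hε2.le] at this
    have h2 : SF α w a₀ s ≤ SF α w a₀ t := ENNReal.toReal_mono hft hlow
    rw [Real.dist_eq]
    simp only [SF] at h1 h2 ⊢
    rw [abs_of_nonpos (by linarith)]
    linarith
  have hright : ∃ δR > (0:ℝ), ∀ s ∈ Icc a₀ b₀, t ≤ s → s - t < δR →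
      dist (SF α w a₀ s) (SF α w a₀ t) < ε := by
    rcases eq_or_lt_of_le ht.2 with heq | hlt
    · refine ⟨1, one_pos, fun s hs hts _ => ?_⟩
      have : s = t := le_antisymm (heq ▸ hs.2) hts
      rw [this]
      simpa using hε
    · obtain ⟨s₁, h1, h2, h3⟩ := mass_right_cont hw hα hΓ hfin ht.1 hlt hε2
      refine ⟨s₁ - t, by linarith, fun s hs hts hd => ?_⟩
      rcases eq_or_lt_of_le hts with rfl | hts'
      · simpa using hε
      · exact hbound s hs (h3 s hts' (by linarith)) hts
  have hleft : ∃ δL > (0:ℝ), ∀ s ∈ Icc a₀ b₀, s ≤ t → t - s < δL →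
      dist (SF α w a₀ s) (SF α w a₀ t) < ε := by
    rcases eq_or_lt_of_le ht.1 with heq | hlt
    · refine ⟨1, one_pos, fun s hs hst _ => ?_⟩
      have : s = t := le_antisymm hst (heq ▸ hs.1)
      rw [this]
      simpa using hε
    · obtain ⟨s₁, h1, h2, h3⟩ := mass_left_cont hw hα hΓ hfin hlt ht.2 hε2
      refine ⟨t - s₁, by linarith, fun s hs hst hd => ?_⟩
      rcases eq_or_lt_of_le hst with rfl | hst'
      · simpa using hε
      · exact hboundL s hs (h3 s (by linarith) hst') hst
  obtain ⟨δR, hδR, hR⟩ := hright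
  obtain ⟨δL, hδL, hL⟩ := hleft
  refine ⟨min δL δR, lt_min hδL hδR, fun {s} hs hd => ?_⟩
  rw [Real.dist_eq] at hd
  rcases le_total t s with h | h
  · refine hR s hs h ?_
    have : |s - t| < δR := lt_of_lt_of_le hd (min_le_right _ _)
    rw [abs_of_nonneg (by linarith)] at this
    exact this
  · refine hL s hs h ?_
    have : |s - t| < δL := lt_of_lt_of_le hd (min_le_left _ _)
    rw [abs_of_nonpos (by linarith)] at this
    linarith [this]

end Mass

end FractalAux

/-- conjugacy of derivatives, converse direction: if h is
bounded and F^α-differentiable at every θ ∈ F with derivative D(θ), and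
g = φ[h], then g is differentiable (within K) at v = J(θ) and
g'(J(θ)) = (D_F^α h)(θ). -/
theorem conjugacy_of_derivatives_converse {n : ℕ} (hn : 1 ≤ n) {a₀ b₀ : ℝ}
    (w : ℝ → EuclideanSpace ℝ (Fin n))
    (hw : ContinuousOn w (Icc a₀ b₀)) (hinj : InjOn w (Icc a₀ b₀))
    {α : ℝ} (hα : α ∈ Icc (1 : ℝ) (n : ℝ))
    (hfin : ∀ t ∈ Icc a₀ b₀, massFn α w a₀ t ≠ ⊤)
    (hS : StrictMonoOn (SF α w a₀) (Icc a₀ b₀))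
    (J : EuclideanSpace ℝ (Fin n) → ℝ)
    (hJ : ∀ t ∈ Icc a₀ b₀, J (w t) = SF α w a₀ t)
    (h D : EuclideanSpace ℝ (Fin n) → ℝ)
    (hbdd : ∃ M, ∀ θ ∈ w '' Icc a₀ b₀, |h θ| ≤ M)
    (hdiff : ∀ θ ∈ w '' Icc a₀ b₀, HasFAlphaDerivAt (w '' Icc a₀ b₀) J h θ (D θ))
    (g : ℝ → ℝ) (hg : ∀ t ∈ Icc a₀ b₀, g (SF α w a₀ t) = h (w t)) :
    ∀ θ ∈ w '' Icc a₀ b₀,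
      HasDerivWithinAt g (D θ) (Icc (SF α w a₀ a₀) (SF α w a₀ b₀)) (J θ) := by
  rintro θ ⟨t₂, ht₂, rfl⟩
  have hα1 : 1 ≤ α := hα.1
  have hΓ : 0 < Real.Gamma (α + 1) := Real.Gamma_pos_of_pos (by linarith)
  have hab : a₀ ≤ b₀ := ht₂.1.trans ht₂.2
  have hcont : ContinuousOn (SF α w a₀) (Icc a₀ b₀) := FractalAux.SF_contOn hw hα1 hfin
  have hmono : MonotoneOn (SF α w a₀) (Icc a₀ b₀) := hS.monotoneOn
  have hsurj : Icc (SF α w a₀ a₀) (SF α w a₀ b₀) ⊆ SF α w a₀ '' Icc a₀ b₀ :=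
    intermediate_value_Icc hab hcont
  rw [hJ t₂ ht₂, hasDerivWithinAt_iff_tendsto_slope, Metric.tendsto_nhdsWithin_nhds]
  intro ε hε
  obtain ⟨δ1, hδ1, hF⟩ := hdiff (w t₂) ⟨t₂, ht₂, rfl⟩ ε hε
  have hwc := hw t₂ ht₂
  rw [Metric.continuousWithinAt_iff] at hwc
  obtain ⟨δw, hδw, hwc⟩ := hwc δ1 hδ1
  have HR : ∃ δR > (0 : ℝ), ∀ t' ∈ Icc a₀ b₀,
      SF α w a₀ t' - SF α w a₀ t₂ < δR → t' - t₂ ≤ δw / 2 := by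
    rcases eq_or_lt_of_le ht₂.2 with heq | hlt
    · refine ⟨1, one_pos, fun t' ht' _ => ?_⟩
      have h1 : t' ≤ t₂ := by rw [heq]; exact ht'.2
      linarith
    · set u := min (t₂ + δw / 2) b₀ with hudef
      have hu1 : t₂ < u := lt_min (by linarith) hlt
      have humem : u ∈ Icc a₀ b₀ := ⟨ht₂.1.trans hu1.le, min_le_right _ _⟩
      have hSu : SF α w a₀ t₂ < SF α w a₀ u := hS ht₂ humem hu1
      refine ⟨SF α w a₀ u - SF α w a₀ t₂, by linarith, fun t' ht' hd => ?_⟩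
      by_contra hcon
      push_neg at hcon
      have hut' : u ≤ t' := le_trans (min_le_left _ _) (by linarith)
      have := hmono humem ht' hut'
      linarith
  have HL : ∃ δL > (0 : ℝ), ∀ t' ∈ Icc a₀ b₀,
      SF α w a₀ t₂ - SF α w a₀ t' < δL → t₂ - t' ≤ δw / 2 := by
    rcases eq_or_lt_of_le ht₂.1 with heq | hlt
    · refine ⟨1, one_pos, fun t' ht' _ => ?_⟩
      have h1 : t₂ ≤ t' := by rw [← heq]; exact ht'.1
      linarith
    · set l := max (t₂ - δw / 2) a₀ with hldef
      have hl1 : l < t₂ := max_lt (by linarith) hlt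
      have hlmem : l ∈ Icc a₀ b₀ := ⟨le_max_right _ _, hl1.le.trans ht₂.2⟩
      have hSl : SF α w a₀ l < SF α w a₀ t₂ := hS hlmem ht₂ hl1
      refine ⟨SF α w a₀ t₂ - SF α w a₀ l, by linarith, fun t' ht' hd => ?_⟩
      by_contra hcon
      push_neg at hcon
      have ht'l : t' ≤ l := le_trans (by linarith) (le_max_left _ _)
      have := hmono ht' hlmem ht'l
      linarith
  obtain ⟨δR, hδR, hR⟩ := HR
  obtain ⟨δL, hδL, hL⟩ := HL
  refine ⟨min δL δR, lt_min hδL hδR, ?_⟩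
  intro v' hv' hdist
  have hv'K : v' ∈ Icc (SF α w a₀ a₀) (SF α w a₀ b₀) := hv'.1
  have hv'ne : v' ≠ SF α w a₀ t₂ := by simpa using hv'.2
  obtain ⟨t', ht', hSt'⟩ := hsurj hv'K
  rw [Real.dist_eq] at hdist
  have habs : |SF α w a₀ t' - SF α w a₀ t₂| < min δL δR := by rw [hSt']; exact hdist
  have hd1 : SF α w a₀ t' - SF α w a₀ t₂ < δR :=
    lt_of_le_of_lt (le_abs_self _) (lt_of_lt_of_le habs (min_le_right _ _))
  have hd2 : SF α w a₀ t₂ - SF α w a₀ t' < δL := by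
    have := lt_of_le_of_lt (neg_le_abs _) (lt_of_lt_of_le habs (min_le_left _ _))
    linarith
  have hb1 : t' - t₂ ≤ δw / 2 := hR t' ht' hd1
  have hb2 : t₂ - t' ≤ δw / 2 := hL t' ht' hd2
  have hwdist : dist t' t₂ < δw := by
    rw [Real.dist_eq, abs_sub_lt_iff]
    constructor <;> linarith
  have hnorm : ‖w t' - w t₂‖ < δ1 := by
    rw [← dist_eq_norm]
    exact hwc ht' hwdist
  have ht'ne : t' ≠ t₂ := by
    intro hcon
    exact hv'ne (by rw [← hSt', hcon])
  have hne : w t' ≠ w t₂ := fun hcon => ht'ne (hinj ht' ht₂ hcon)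
  rw [slope_def_field, Real.dist_eq, ← hSt', hg t' ht', hg t₂ ht₂, ← hJ t' ht', ← hJ t₂ ht₂]
  exact hF (w t') ⟨t', ht', rfl⟩ hne hnorm
end
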